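/- arXiv:1408.0976 — 14 statements merged into one kernel-verified Lean document; each statement's English description precedes it below -/
import Mathlib

section
/- For any stochastic (each row sums to 1, nonnegative entries) n×n matrix A = (a_ij), the permanent satisfies Per(A) ≤ 2^n · ∏_{i,j} (1-a_ij)^{1-a_ij}. -/
open scoped BigOperators

noncomputable def perm {n : ℕ} (A : Matrix (Fin n) (Fin n) ℝ) : ℝ :=
  ∑ σ : Equiv.Perm (Fin n), ∏ i, A i (σ i)

namespace Stmt2Aux

open Finset Real

/-! ### Single variable inequalities -/

-- log u ≥ (u - 1/u)/2 for 0 < u ≤ 1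
lemma sv_log_ge {u : ℝ} (h0 : 0 < u) (h1 : u ≤ 1) : (u - 1/u)/2 ≤ Real.log u := by
  have hlog : Real.log u ≤ 0 := Real.log_nonpos h0.le h1
  have h := Real.self_le_sinh_iff.mpr (neg_nonneg.mpr hlog)
  rw [Real.sinh_eq, Real.exp_neg, neg_neg, Real.exp_log h0] at h
  have : u⁻¹ = 1/u := (one_div u).symm
  rw [this] at h
  linarith

-- (1-x) log (1-x) ≥ -x + x^2/2 on [0,1]
lemma sv1 {x : ℝ} (h0 : 0 ≤ x) (h1 : x ≤ 1) :
    -x + x^2/2 ≤ (1-x) * Real.log (1-x) := by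
  rcases eq_or_lt_of_le h1 with h | h
  · subst h; norm_num
  · have hu0 : 0 < 1 - x := by linarith
    have hu1 : 1 - x ≤ 1 := by linarith
    have h2 := sv_log_ge hu0 hu1
    have h3 : (1-x) * (((1-x) - 1/(1-x))/2) ≤ (1-x) * Real.log (1-x) :=
      mul_le_mul_of_nonneg_left h2 hu0.le
    have h4 : (1-x) * (((1-x) - 1/(1-x))/2) = -x + x^2/2 := by
      field_simp
      ring
    linarith

lemma psi_ge {x : ℝ} (h0 : 0 ≤ x) (h1 : x ≤ 1) : -x ≤ (1-x) * Real.log (1-x) := by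
  nlinarith [sv1 h0 h1, sq_nonneg x]

lemma mul_log_ge {t : ℝ} (ht : 0 < t) : -(Real.exp 1)⁻¹ ≤ t * Real.log t := by
  have he : (0:ℝ) < Real.exp 1 := Real.exp_pos 1
  have h1 : (0:ℝ) < (Real.exp 1 * t)⁻¹ := by positivity
  have h2 := Real.log_le_sub_one_of_pos h1
  rw [Real.log_inv, Real.log_mul (ne_of_gt he) (ne_of_gt ht), Real.log_exp] at h2
  -- -(1 + log t) ≤ (e t)⁻¹ - 1, so -log t ≤ (e t)⁻¹
  have h3 : -Real.log t ≤ (Real.exp 1 * t)⁻¹ := by linarith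
  have h4 : t * (-Real.log t) ≤ t * (Real.exp 1 * t)⁻¹ := mul_le_mul_of_nonneg_left h3 ht.le
  have h5 : t * (Real.exp 1 * t)⁻¹ = (Real.exp 1)⁻¹ := by
    field_simp
  rw [h5] at h4
  linarith

lemma sv2 {u : ℝ} (h0 : 0 < u) (h1 : u ≤ 1) : 0 ≤ Real.log 2 + u * Real.log u - u/2 := by
  have hs : (0:ℝ) < Real.exp (1/2) := Real.exp_pos _
  set t : ℝ := u * Real.exp (-(1/2)) with ht
  have ht0 : 0 < t := by positivity
  have hlt : Real.log t = Real.log u - 1/2 := by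
    rw [ht, Real.log_mul (ne_of_gt h0) (ne_of_gt (Real.exp_pos _)), Real.log_exp]; ring
  have hprod : Real.exp (1/2) * Real.exp (-(1/2)) = 1 := by
    rw [← Real.exp_add]; norm_num
  have key : u * Real.log u - u/2 = Real.exp (1/2) * (t * Real.log t) := by
    rw [hlt, ht]
    have : Real.exp (1/2) * (u * Real.exp (-(1/2)) * (Real.log u - 1/2))
        = (Real.exp (1/2) * Real.exp (-(1/2))) * (u * (Real.log u - 1/2)) := by ring
    rw [this, hprod]
    ring
  have hb := mul_log_ge ht0
  have h6 : Real.exp (1/2) * (-(Real.exp 1)⁻¹) ≤ Real.exp (1/2) * (t * Real.log t) :=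
    mul_le_mul_of_nonneg_left hb hs.le
  have hsq : Real.exp (1/2) * Real.exp (1/2) = Real.exp 1 := by
    rw [← Real.exp_add]; norm_num
  have hnum : Real.exp (1/2) * (-(Real.exp 1)⁻¹) = -(Real.exp (1/2))⁻¹ := by
    rw [← hsq]
    field_simp
  have hlog2 : (0.6931471803 : ℝ) < Real.log 2 := Real.log_two_gt_d9
  have hexp1 : (2.7182818283 : ℝ) < Real.exp 1 := Real.exp_one_gt_d9
  have hfin : -(Real.exp (1/2))⁻¹ ≥ -Real.log 2 := by
    rw [ge_iff_le, neg_le_neg_iff]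
    rw [inv_le_iff_one_le_mul₀ hs]
    nlinarith [hsq, hs]
  nlinarith [h6, hnum, hfin, key]

lemma sv3 {c : ℝ} (h0 : 0 < c) (h1 : c < 1) :
    -(((1-c) * Real.log (1-c) - (1-c) + 1)/c) ≤ Real.log 2 + c * Real.log c - c := by
  rw [neg_div', div_le_iff₀ h0]
  have h1' := sv1 h0.le h1.le
  have h2' := sv2 h0 h1.le
  nlinarith [mul_nonneg h0.le h2']

/-! ### Trapezoid estimate -/

-- antiderivative of t ↦ log (1 - c t)
noncomputable def Fa (c t : ℝ) : ℝ := -(((1-c*t) * Real.log (1-c*t) - (1-c*t))/c)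

lemma trap {c : ℝ} (hc0 : 0 < c) (hc1 : c < 1) {x y : ℝ} (hx : 0 ≤ x) (hxy : x ≤ y)
    (hy : y ≤ 1) :
    (y - x) * (Real.log (1-c*x) + Real.log (1-c*y))/2 ≤ Fa c y - Fa c x := by
  rcases eq_or_lt_of_le hxy with rfl | hxy'
  · simp
  have hzpos : ∀ t : ℝ, t ≤ 1 → 0 < 1 - c * t := by
    intro t htle; nlinarith
  set G : ℝ → ℝ := fun t =>
    Fa c t - Fa c x - (t - x) * (Real.log (1 - c * x) + Real.log (1 - c * t))/2 with hGdef
  have hasD : ∀ t : ℝ, t ≤ 1 → HasDerivAt G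
      (Real.log (1-c*t) -
        ((Real.log (1 - c * x) + Real.log (1-c*t)) + (t - x) * (-c/(1-c*t)))/2) t := by
    intro t htle
    have hz := hzpos t htle
    have hinner : HasDerivAt (fun s : ℝ => 1 - c * s) (-c) t := by
      simpa using ((hasDerivAt_id t).const_mul c).const_sub 1
    have hml : HasDerivAt (fun s : ℝ => (1-c*s) * Real.log (1-c*s))
        ((Real.log (1-c*t) + 1) * (-c)) t :=
      by have := (Real.hasDerivAt_mul_log (ne_of_gt hz)).comp t hinner; exact this
    have hFa : HasDerivAt (fun s : ℝ => Fa c s) (Real.log (1-c*t)) t := by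
      have h1 : HasDerivAt (fun s : ℝ => ((1-c*s) * Real.log (1-c*s) - (1-c*s))/c)
          (((Real.log (1-c*t) + 1) * (-c) - (-c))/c) t := (hml.sub hinner).div_const c
      have h2 := h1.neg
      have h3 : -((((Real.log (1-c*t) + 1) * (-c) - (-c)))/c) = Real.log (1-c*t) := by
        field_simp
        ring
      rw [h3] at h2
      exact h2
    have hlog : HasDerivAt (fun s : ℝ => Real.log (1 - c*s)) (-c/(1-c*t)) t :=
      hinner.log (ne_of_gt hz)
    have hchord : HasDerivAt
        (fun s : ℝ => (s - x) * (Real.log (1 - c * x) + Real.log (1 - c * s))/2)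
        ((1 * (Real.log (1 - c * x) + Real.log (1-c*t))
          + (t - x) * (0 + -c/(1-c*t)))/2) t := by
      exact (((hasDerivAt_id t).sub_const x).mul
        ((hasDerivAt_const t (Real.log (1 - c * x))).add hlog)).div_const 2
    have := (hFa.sub_const (Fa c x)).sub hchord
    exact this.congr_deriv (by ring)
  have hmono : MonotoneOn G (Set.Icc x 1) := by
    apply monotoneOn_of_deriv_nonneg (convex_Icc x 1)
    · intro t ht
      exact (hasD t ht.2).continuousAt.continuousWithinAt
    · intro t ht
      rw [interior_Icc] at ht
      exact (hasD t ht.2.le).differentiableAt.differentiableWithinAt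
    · intro t ht
      rw [interior_Icc] at ht
      rw [(hasD t ht.2.le).deriv]
      have hz := hzpos t ht.2.le
      have hzx := hzpos x (by linarith [ht.1, ht.2])
      have hdiv : Real.log ((1-c*x)/(1-c*t)) ≤ (1-c*x)/(1-c*t) - 1 :=
        Real.log_le_sub_one_of_pos (by positivity)
      rw [Real.log_div (ne_of_gt hzx) (ne_of_gt hz)] at hdiv
      have heq : (1-c*x)/(1-c*t) - 1 = c*(t-x)/(1-c*t) := by
        field_simp; ring
      rw [heq] at hdiv
      have heq2 : Real.log (1-c*t) -
          ((Real.log (1 - c * x) + Real.log (1-c*t)) + (t - x) * (-c/(1-c*t)))/2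
          = ((Real.log (1-c*t) - Real.log (1-c*x)) + c*(t-x)/(1-c*t))/2 := by
        ring
      rw [heq2]
      linarith
  have hGx : G x = 0 := by simp [hGdef]
  have hle : G x ≤ G y := hmono ⟨le_refl x, by linarith⟩ ⟨hxy, hy⟩ hxy
  rw [hGx] at hle
  simp only [hGdef] at hle
  linarith

-- the discrete sum bound
lemma sum_le_int {c : ℝ} (hc0 : 0 < c) (hc1 : c < 1) {n : ℕ} (hn : 2 ≤ n) :
    (n:ℝ)⁻¹ * ∑ p ∈ range n, Real.log (1 - c*(p/((n:ℝ)-1))) ≤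
      -(((1-c) * Real.log (1-c) - (1-c) + 1)/c) := by
  have hn1 : (0:ℝ) < (n:ℝ) - 1 := by
    have : (2:ℝ) ≤ (n:ℝ) := by exact_mod_cast hn
    linarith
  have hnpos : (0:ℝ) < (n:ℝ) := by linarith
  set f : ℕ → ℝ := fun p => Real.log (1 - c*(p/((n:ℝ)-1))) with hfdef
  set S : ℝ := ∑ p ∈ range n, f p with hSdef
  have hxle : ∀ p : ℕ, p ≤ n - 1 → (p:ℝ)/((n:ℝ)-1) ≤ 1 := by
    intro p hp
    rw [div_le_one hn1]
    have : (p:ℝ) ≤ (n:ℝ) - 1 := by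
      have h' : (p:ℝ) ≤ ((n-1 : ℕ):ℝ) := by exact_mod_cast hp
      rw [Nat.cast_sub (by omega)] at h'
      simpa using h'
    linarith
  -- telescoping trapezoid bound
  have htrap : ∀ p ∈ range (n-1), (f p + f (p+1))/(2*((n:ℝ)-1)) ≤
      Fa c ((p+1:ℕ)/((n:ℝ)-1)) - Fa c ((p:ℕ)/((n:ℝ)-1)) := by
    intro p hp
    rw [Finset.mem_range] at hp
    have h1 : (0:ℝ) ≤ (p:ℝ)/((n:ℝ)-1) := by positivity
    have h2 : (p:ℝ)/((n:ℝ)-1) ≤ ((p+1:ℕ):ℝ)/((n:ℝ)-1) := by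
      gcongr
      exact_mod_cast Nat.le_succ p
    have h3 : ((p+1:ℕ):ℝ)/((n:ℝ)-1) ≤ 1 := hxle (p+1) (by omega)
    have := trap hc0 hc1 h1 h2 h3
    have heq : (((p+1:ℕ):ℝ)/((n:ℝ)-1) - (p:ℝ)/((n:ℝ)-1)) = 1/((n:ℝ)-1) := by
      push_cast
      field_simp
      ring
    rw [heq] at this
    calc (f p + f (p+1))/(2*((n:ℝ)-1))
        = 1/((n:ℝ)-1) * (Real.log (1 - c*((p:ℝ)/((n:ℝ)-1)))
            + Real.log (1 - c*(((p+1:ℕ):ℝ)/((n:ℝ)-1))))/2 := by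
          rw [hfdef]
          have h4 : ((n:ℝ)-1) ≠ 0 := ne_of_gt hn1
          field_simp
          try ring
          try exact Or.inl trivial
      _ ≤ _ := this
  -- telescoping
  have hcast : (((n-1:ℕ)):ℝ) = (n:ℝ) - 1 := by
    rw [Nat.cast_sub (by omega)]; simp
  have htel : ∑ p ∈ range (n-1),
      (Fa c (((p+1:ℕ):ℝ)/((n:ℝ)-1)) - Fa c ((p:ℕ)/((n:ℝ)-1)))
      = Fa c 1 - Fa c 0 := by
    rw [Finset.sum_range_sub (fun p => Fa c ((p:ℕ)/((n:ℝ)-1)))]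
    rw [hcast, div_self (ne_of_gt hn1)]
    norm_num
  have hsum1 : ∑ p ∈ range (n-1), (f p + f (p+1))/(2*((n:ℝ)-1)) ≤ Fa c 1 - Fa c 0 := by
    rw [← htel]
    exact Finset.sum_le_sum htrap
  -- rewrite the LHS of hsum1
  have hf0 : f 0 = 0 := by simp [hfdef]
  have hfn1 : f (n-1) = Real.log (1-c) := by
    simp only [hfdef, hcast, div_self (ne_of_gt hn1)]
    norm_num
  have hsplit : ∑ p ∈ range (n-1), (f p + f (p+1)) = 2*S - f 0 - f (n-1) := by
    rw [Finset.sum_add_distrib]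
    have e1 : ∑ p ∈ range (n-1), f p = S - f (n-1) := by
      have : S = ∑ p ∈ range ((n-1)+1), f p := by
        rw [hSdef, Nat.sub_add_cancel (by omega : 1 ≤ n)]
      rw [Finset.sum_range_succ] at this
      linarith
    have e2 : ∑ p ∈ range (n-1), f (p+1) = S - f 0 := by
      have : S = ∑ p ∈ range ((n-1)+1), f p := by
        rw [hSdef, Nat.sub_add_cancel (by omega : 1 ≤ n)]
      rw [Finset.sum_range_succ'] at this
      linarith
    rw [e1, e2]; ring
  have hsum2 : (2*S - Real.log (1-c))/(2*((n:ℝ)-1)) ≤ Fa c 1 - Fa c 0 := by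
    have : ∑ p ∈ range (n-1), (f p + f (p+1))/(2*((n:ℝ)-1))
        = (2*S - f 0 - f (n-1))/(2*((n:ℝ)-1)) := by
      rw [← hsplit, Finset.sum_div]
    rw [this, hf0, hfn1] at hsum1
    convert hsum1 using 2
    ring
  -- chord bound
  have hchord : ∀ p ∈ range n, ((p:ℝ)/((n:ℝ)-1)) * Real.log (1-c) ≤ f p := by
    intro p hp
    rw [Finset.mem_range] at hp
    have hx0 : (0:ℝ) ≤ (p:ℝ)/((n:ℝ)-1) := by positivity
    have hx1 : (p:ℝ)/((n:ℝ)-1) ≤ 1 := hxle p (by omega)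
    have hgm := Real.geom_mean_le_arith_mean2_weighted
      (by linarith : (0:ℝ) ≤ 1 - (p:ℝ)/((n:ℝ)-1)) hx0
      (by norm_num : (0:ℝ) ≤ 1) (by linarith : (0:ℝ) ≤ 1 - c) (by ring)
    rw [Real.one_rpow] at hgm
    have hgm' : (1-c) ^ ((p:ℝ)/((n:ℝ)-1)) ≤ 1 - c*((p:ℝ)/((n:ℝ)-1)) := by
      calc (1-c) ^ ((p:ℝ)/((n:ℝ)-1)) = 1 * (1-c) ^ ((p:ℝ)/((n:ℝ)-1)) := by ring
        _ ≤ (1 - (p:ℝ)/((n:ℝ)-1)) * 1 + ((p:ℝ)/((n:ℝ)-1)) * (1-c) := hgm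
        _ = 1 - c*((p:ℝ)/((n:ℝ)-1)) := by ring
    have hlog := Real.log_le_log (Real.rpow_pos_of_pos (by linarith) _) hgm'
    rw [Real.log_rpow (by linarith : (0:ℝ) < 1-c)] at hlog
    exact hlog
  have hgauss : (∑ p ∈ range n, (p:ℝ)) = (n:ℝ)*((n:ℝ)-1)/2 := by
    have := Finset.sum_range_id_mul_two n
    have hc' : ((∑ i ∈ range n, i) * 2 : ℕ) = (n * (n-1) : ℕ) := this
    have : ((∑ i ∈ range n, i : ℕ) : ℝ) * 2 = (n:ℝ) * ((n:ℝ)-1) := by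
      rw [← Nat.cast_ofNat, ← Nat.cast_mul, hc', Nat.cast_mul, hcast]
    push_cast at this ⊢
    linarith
  have hSge : (n:ℝ)/2 * Real.log (1-c) ≤ S := by
    have h5 := Finset.sum_le_sum hchord
    have h6 : ∑ p ∈ range n, ((p:ℝ)/((n:ℝ)-1)) * Real.log (1-c)
        = (n:ℝ)/2 * Real.log (1-c) := by
      rw [← Finset.sum_mul, ← Finset.sum_div, hgauss]
      field_simp
    rw [h6] at h5
    exact h5
  -- conclude
  have hI : Fa c 1 - Fa c 0 = -(((1-c) * Real.log (1-c) - (1-c) + 1)/c) := by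
    simp only [Fa, mul_one, mul_zero, sub_zero, Real.log_one]
    field_simp
    ring
  rw [← hI]
  set I := Fa c 1 - Fa c 0 with hIdef
  set L := Real.log (1-c) with hLdef
  -- from hsum2 : (2S - L)/(2(n-1)) ≤ I ; from hSge : (n/2) L ≤ S; want n⁻¹ S ≤ I
  have h7 : 2*S - L ≤ 2*((n:ℝ)-1) * I := by
    rw [div_le_iff₀ (by linarith : (0:ℝ) < 2*((n:ℝ)-1))] at hsum2
    linarith
  have h8 : L ≤ 2*S/(n:ℝ) := by
    rw [← sub_nonneg] at hSge ⊢
    have : 2*S/(n:ℝ) - L = (2/(n:ℝ)) * (S - (n:ℝ)/2 * L) := by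
      field_simp
    rw [this]
    positivity
  have h8' : L * (n:ℝ) ≤ 2*S := by
    rw [le_div_iff₀ hnpos] at h8
    linarith
  rw [inv_mul_le_iff₀ hnpos]
  have h9 : (2*S - L) * (n:ℝ) ≤ 2*((n:ℝ)-1)*I * (n:ℝ) :=
    mul_le_mul_of_nonneg_right h7 hnpos.le
  have h10 : 2*((n:ℝ)-1) * S ≤ 2*((n:ℝ)-1) * ((n:ℝ) * I) := by nlinarith [h9, h8']
  exact le_of_mul_le_mul_left h10 (by linarith : (0:ℝ) < 2*((n:ℝ)-1))

/-! ### The sequential lemma -/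

variable {n : ℕ}

def avail (T : Finset (Fin n)) {k : ℕ} (σ : Fin k → Fin n) (i : Fin k) : Finset (Fin n) :=
  T \ (Finset.univ.filter (fun i' => i' < i)).image σ

noncomputable def term (b : ℕ → Fin n → ℝ) (T : Finset (Fin n)) {k : ℕ}
    (σ : Fin k → Fin n) : ℝ :=
  ∏ i : Fin k, b (i : ℕ) (σ i) / ∑ j ∈ avail T σ i, b (i : ℕ) j

lemma term_nonneg {b : ℕ → Fin n → ℝ} (hb : ∀ i j, 0 ≤ b i j) (T : Finset (Fin n)) {k : ℕ}
    (σ : Fin k → Fin n) : 0 ≤ term b T σ := by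
  classical
  exact Finset.prod_nonneg fun i _ => div_nonneg (hb _ _) (Finset.sum_nonneg fun j _ => hb _ _)

lemma seq : ∀ (k : ℕ) (b : ℕ → Fin n → ℝ), (∀ i j, 0 ≤ b i j) → ∀ (T : Finset (Fin n)),
    ∑ σ ∈ Finset.univ.filter (fun σ : Fin k → Fin n => ∀ i, σ i ∈ avail T σ i),
      term b T σ ≤ 1 := by
  intro k
  induction k with
  | zero =>
    intro b hb T
    have h1 : ∀ σ : Fin 0 → Fin n, term b T σ = 1 := by
      intro σ
      rw [term]
      simp
    rw [Finset.sum_congr rfl (fun σ _ => h1 σ), Finset.sum_const, nsmul_eq_mul, mul_one]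
    have h2 := Finset.card_filter_le (Finset.univ : Finset (Fin 0 → Fin n))
      (fun σ => ∀ i, σ i ∈ avail T σ i)
    haveI : Unique (Fin 0 → Fin n) :=
      ⟨⟨fun i => i.elim0⟩, fun f => funext fun i => i.elim0⟩
    have h3 : (Finset.univ : Finset (Fin 0 → Fin n)).card = 1 := by
      rw [Finset.card_univ, Fintype.card_unique]
    have h4 : (Finset.univ.filter (fun σ : Fin 0 → Fin n => ∀ i, σ i ∈ avail T σ i)).card ≤ 1 :=
      h3 ▸ h2
    exact_mod_cast h4
  | succ k ih =>
    intro b hb T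
    classical
    set b' : ℕ → Fin n → ℝ := fun i => b (i+1) with hb'def
    have hb' : ∀ i j, 0 ≤ b' i j := fun i j => hb _ _
    -- set identities
    have s1 : ∀ (j : Fin n) (σ' : Fin k → Fin n),
        avail T (Fin.cons j σ' : Fin (k+1) → Fin n) 0 = T := by
      intro j σ'
      rw [avail]
      have : (Finset.univ.filter (fun i' : Fin (k+1) => i' < 0)) = ∅ := by
        apply Finset.filter_false_of_mem
        intro i _
        exact Fin.not_lt_zero i
      rw [this]
      simp
    have s2 : ∀ (j : Fin n) (σ' : Fin k → Fin n) (i : Fin k),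
        avail T (Fin.cons j σ' : Fin (k+1) → Fin n) i.succ = avail (T.erase j) σ' i := by
      intro j σ' i
      rw [avail, avail]
      have hfilt : (Finset.univ.filter (fun i' : Fin (k+1) => i' < i.succ))
          = insert 0 ((Finset.univ.filter (fun i' : Fin k => i' < i)).image Fin.succ) := by
        ext i'
        simp only [Finset.mem_filter, Finset.mem_univ, true_and, Finset.mem_insert,
          Finset.mem_image]
        constructor
        · intro hlt
          rcases Fin.eq_zero_or_eq_succ i' with h | ⟨i'', rfl⟩
          · exact Or.inl h
          · right
            refine ⟨i'', ?_, rfl⟩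
            exact Fin.succ_lt_succ_iff.mp hlt
        · rintro (h | ⟨i'', hlt, rfl⟩)
          · subst h
            exact Fin.succ_pos i
          · exact Fin.succ_lt_succ_iff.mpr hlt
      rw [hfilt, Finset.image_insert, Fin.cons_zero, Finset.image_image]
      have himg : ((Finset.univ.filter (fun i' : Fin k => i' < i)).image
          ((Fin.cons j σ' : Fin (k+1) → Fin n) ∘ Fin.succ))
          = (Finset.univ.filter (fun i' : Fin k => i' < i)).image σ' := by
        apply Finset.image_congr
        intro x _
        simp [Fin.cons_succ]
      rw [himg]
      ext x
      simp only [Finset.mem_sdiff, Finset.mem_insert, Finset.mem_erase]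
      tauto
    have s3 : ∀ (j : Fin n) (σ' : Fin k → Fin n),
        (∀ i, (Fin.cons j σ' : Fin (k+1) → Fin n) i
            ∈ avail T (Fin.cons j σ' : Fin (k+1) → Fin n) i)
          ↔ (j ∈ T ∧ ∀ i, σ' i ∈ avail (T.erase j) σ' i) := by
      intro j σ'
      rw [Fin.forall_fin_succ]
      constructor
      · rintro ⟨h0, hs⟩
        constructor
        · rw [s1] at h0
          simpa using h0
        · intro i
          have := hs i
          rw [s2, Fin.cons_succ] at this
          exact this
      · rintro ⟨h0, hs⟩
        constructor
        · rw [s1, Fin.cons_zero]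
          exact h0
        · intro i
          rw [s2, Fin.cons_succ]
          exact hs i
    have s4 : ∀ (j : Fin n) (σ' : Fin k → Fin n),
        term b T (Fin.cons j σ' : Fin (k+1) → Fin n)
          = (b 0 j / ∑ j' ∈ T, b 0 j') * term b' (T.erase j) σ' := by
      intro j σ'
      rw [term, term, Fin.prod_univ_succ]
      congr 1
      · rw [s1, Fin.cons_zero]
        norm_num
      · apply Finset.prod_congr rfl
        intro i _
        rw [s2, Fin.cons_succ, hb'def]
        norm_num [Fin.val_succ]
    -- reindex the sum
    set e := (Fin.consEquiv (fun _ : Fin (k+1) => Fin n)) with hedef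
    rw [Finset.sum_filter]
    rw [← Equiv.sum_comp e (fun σ : Fin (k+1) → Fin n =>
      if (∀ i, σ i ∈ avail T σ i) then term b T σ else 0)]
    rw [Fintype.sum_prod_type]
    have hptw : ∀ (j : Fin n) (σ' : Fin k → Fin n),
        (if (∀ i, (e ⟨j, σ'⟩) i ∈ avail T (e ⟨j, σ'⟩) i) then term b T (e ⟨j, σ'⟩) else 0)
          = (if j ∈ T then (b 0 j / ∑ j' ∈ T, b 0 j') *
              (if (∀ i, σ' i ∈ avail (T.erase j) σ' i) then term b' (T.erase j) σ' else 0)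
            else 0) := by
      intro j σ'
      have he : e ⟨j, σ'⟩ = Fin.cons j σ' := rfl
      rw [he]
      by_cases h1 : j ∈ T
      · by_cases h2 : ∀ i, σ' i ∈ avail (T.erase j) σ' i
        · rw [if_pos ((s3 j σ').mpr ⟨h1, h2⟩), if_pos h1, if_pos h2, s4]
        · rw [if_neg, if_pos h1, if_neg h2, mul_zero]
          intro hcontra
          exact h2 ((s3 j σ').mp hcontra).2
      · rw [if_neg, if_neg h1]
        intro hcontra
        exact h1 ((s3 j σ').mp hcontra).1
    rw [Finset.sum_congr rfl (fun j _ => Finset.sum_congr rfl (fun σ' _ => hptw j σ'))]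
    -- now bound
    have hstep : ∀ j : Fin n,
        (∑ σ' : Fin k → Fin n, (if j ∈ T then (b 0 j / ∑ j' ∈ T, b 0 j') *
              (if (∀ i, σ' i ∈ avail (T.erase j) σ' i) then term b' (T.erase j) σ' else 0)
            else 0))
          ≤ (if j ∈ T then b 0 j / ∑ j' ∈ T, b 0 j' else 0) := by
      intro j
      by_cases h1 : j ∈ T
      · simp only [if_pos h1]
        rw [← Finset.mul_sum]
        have hinner : (∑ σ' : Fin k → Fin n,
            (if (∀ i, σ' i ∈ avail (T.erase j) σ' i) then term b' (T.erase j) σ' else 0)) ≤ 1 := by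
          rw [← Finset.sum_filter]
          exact ih b' hb' (T.erase j)
        have hc : 0 ≤ b 0 j / ∑ j' ∈ T, b 0 j' :=
          div_nonneg (hb _ _) (Finset.sum_nonneg (fun _ _ => hb _ _))
        calc (b 0 j / ∑ j' ∈ T, b 0 j') * (∑ σ' : Fin k → Fin n,
              (if (∀ i, σ' i ∈ avail (T.erase j) σ' i) then term b' (T.erase j) σ' else 0))
            ≤ (b 0 j / ∑ j' ∈ T, b 0 j') * 1 := by
              apply mul_le_mul_of_nonneg_left hinner hc
          _ = b 0 j / ∑ j' ∈ T, b 0 j' := mul_one _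
      · simp only [if_neg h1]
        simp
    calc (∑ j : Fin n, ∑ σ' : Fin k → Fin n, _)
        ≤ ∑ j : Fin n, (if j ∈ T then b 0 j / ∑ j' ∈ T, b 0 j' else 0) :=
          Finset.sum_le_sum (fun j _ => hstep j)
      _ = ∑ j ∈ T, b 0 j / ∑ j' ∈ T, b 0 j' := by
          rw [Finset.sum_ite_mem, Finset.univ_inter]
      _ = (∑ j ∈ T, b 0 j) / (∑ j' ∈ T, b 0 j') := by
          rw [Finset.sum_div]
      _ ≤ 1 := by
          rcases eq_or_lt_of_le (Finset.sum_nonneg (fun j (_ : j ∈ T) => hb 0 j)) with h | h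
          · rw [← h]
            norm_num
          · rw [div_self (ne_of_gt h)]

/-! ### Permutation definitions -/

variable (A : Matrix (Fin n) (Fin n) ℝ)

noncomputable def w (σ : Equiv.Perm (Fin n)) : ℝ := ∏ i, A i (σ i)

def pred (ord : Equiv.Perm (Fin n)) (r : Fin n) : Finset (Fin n) :=
  Finset.univ.filter fun r' => ord r' < ord r

noncomputable def mrow (σ ord : Equiv.Perm (Fin n)) (r : Fin n) : ℝ :=
  1 - ∑ r' ∈ pred ord r, A r (σ r')

noncomputable def Mm (σ ord : Equiv.Perm (Fin n)) : ℝ := ∏ r, mrow A σ ord r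

variable {A}

section Basic

variable (hnn : ∀ i j, 0 ≤ A i j) (hrow : ∀ i, ∑ j, A i j = 1)
include hnn hrow

lemma entry_le_one (i j : Fin n) : A i j ≤ 1 := by
  rw [← hrow i]
  exact Finset.single_le_sum (fun j' _ => hnn i j') (Finset.mem_univ j)

lemma row_sum_comp (σ : Equiv.Perm (Fin n)) (r : Fin n) : ∑ r', A r (σ r') = 1 := by
  rw [Equiv.sum_comp σ (fun j => A r j)]
  exact hrow r

lemma mrow_ge (σ ord : Equiv.Perm (Fin n)) (r : Fin n) : A r (σ r) ≤ mrow A σ ord r := by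
  classical
  have hr : r ∉ pred ord r := by
    simp [pred]
  have hsub : insert r (pred ord r) ⊆ Finset.univ := Finset.subset_univ _
  have h1 : ∑ r' ∈ insert r (pred ord r), A r (σ r') ≤ ∑ r', A r (σ r') :=
    Finset.sum_le_sum_of_subset_of_nonneg hsub (fun r' _ _ => hnn r (σ r'))
  rw [Finset.sum_insert hr, row_sum_comp hnn hrow] at h1
  rw [mrow]
  linarith

lemma mrow_le_one (σ ord : Equiv.Perm (Fin n)) (r : Fin n) : mrow A σ ord r ≤ 1 := by
  rw [mrow]
  have : (0:ℝ) ≤ ∑ r' ∈ pred ord r, A r (σ r') :=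
    Finset.sum_nonneg (fun r' _ => hnn r (σ r'))
  linarith

end Basic

section Counting

variable (r : Fin n)

lemma card_fiber_eq (p q : Fin n) :
    (Finset.univ.filter (fun pe : Equiv.Perm (Fin n) => pe r = p)).card
      = (Finset.univ.filter (fun pe : Equiv.Perm (Fin n) => pe r = q)).card := by
  classical
  apply Finset.card_bij' (fun pe _ => (Equiv.swap p q) * pe) (fun pe _ => (Equiv.swap p q) * pe)
  · intro pe hpe
    rw [Finset.mem_filter] at hpe ⊢
    refine ⟨Finset.mem_univ _, ?_⟩
    rw [Equiv.Perm.mul_apply, hpe.2, Equiv.swap_apply_left]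
  · intro pe hpe
    rw [Finset.mem_filter] at hpe ⊢
    refine ⟨Finset.mem_univ _, ?_⟩
    rw [Equiv.Perm.mul_apply, hpe.2, Equiv.swap_apply_right]
  · intro pe _
    rw [← mul_assoc, Equiv.swap_mul_self, one_mul]
  · intro pe _
    rw [← mul_assoc, Equiv.swap_mul_self, one_mul]

lemma card_fiber_mul (p : Fin n) :
    (Finset.univ.filter (fun pe : Equiv.Perm (Fin n) => pe r = p)).card * n = n.factorial := by
  classical
  have h1 : (Finset.univ : Finset (Equiv.Perm (Fin n))).card
      = ∑ q : Fin n, (Finset.univ.filter (fun pe : Equiv.Perm (Fin n) => pe r = q)).card :=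
    Finset.card_eq_sum_card_fiberwise (fun pe _ => Finset.mem_univ (pe r))
  have h2 : ∀ q : Fin n, (Finset.univ.filter (fun pe : Equiv.Perm (Fin n) => pe r = q)).card
      = (Finset.univ.filter (fun pe : Equiv.Perm (Fin n) => pe r = p)).card :=
    fun q => card_fiber_eq r q p
  rw [Finset.sum_congr rfl (fun q _ => h2 q), Finset.sum_const] at h1
  simp only [Finset.card_univ, Fintype.card_perm, Fintype.card_fin, smul_eq_mul] at h1
  rw [mul_comm]
  exact h1.symm

lemma card_fiber_pos (p : Fin n) (hn : 0 < n) :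
    0 < (Finset.univ.filter (fun pe : Equiv.Perm (Fin n) => pe r = p)).card := by
  by_contra h
  push_neg at h
  have h0 : (Finset.univ.filter (fun pe : Equiv.Perm (Fin n) => pe r = p)).card = 0 := by omega
  have := card_fiber_mul r p
  rw [h0, zero_mul] at this
  exact absurd this.symm (Nat.factorial_pos n).ne'

lemma card_predset (pe : Equiv.Perm (Fin n)) : (pred pe r).card = (pe r : ℕ) := by
  classical
  rw [pred]
  rw [← Fin.card_Iio (pe r)]
  apply Finset.card_bij (fun r' _ => pe r')
  · intro r' hr'
    rw [Finset.mem_filter] at hr'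
    exact Finset.mem_Iio.mpr hr'.2
  · intro r1 h1 r2 h2 he
    exact pe.injective he
  · intro q hq
    refine ⟨pe.symm q, ?_, by simp⟩
    rw [Finset.mem_filter]
    refine ⟨Finset.mem_univ _, ?_⟩
    rw [Equiv.apply_symm_apply]
    exact Finset.mem_Iio.mp hq

lemma swap_count {r1 r2 : Fin n} (h1 : r1 ≠ r) (h2 : r2 ≠ r) (p : Fin n) :
    (Finset.univ.filter (fun pe : Equiv.Perm (Fin n) => pe r = p ∧ pe r1 < p)).card
      = (Finset.univ.filter (fun pe : Equiv.Perm (Fin n) => pe r = p ∧ pe r2 < p)).card := by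
  classical
  apply Finset.card_bij' (fun pe _ => pe * (Equiv.swap r1 r2)) (fun pe _ => pe * (Equiv.swap r1 r2))
  · intro pe hpe
    rw [Finset.mem_filter] at hpe ⊢
    refine ⟨Finset.mem_univ _, ?_, ?_⟩
    · rw [Equiv.Perm.mul_apply, Equiv.swap_apply_of_ne_of_ne (Ne.symm h1) (Ne.symm h2)]
      exact hpe.2.1
    · rw [Equiv.Perm.mul_apply, Equiv.swap_apply_right]
      exact hpe.2.2
  · intro pe hpe
    rw [Finset.mem_filter] at hpe ⊢
    refine ⟨Finset.mem_univ _, ?_, ?_⟩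
    · rw [Equiv.Perm.mul_apply, Equiv.swap_apply_of_ne_of_ne (Ne.symm h1) (Ne.symm h2)]
      exact hpe.2.1
    · rw [Equiv.Perm.mul_apply, Equiv.swap_apply_left]
      exact hpe.2.2
  · intro pe _
    rw [mul_assoc, Equiv.swap_mul_self, mul_one]
  · intro pe _
    rw [mul_assoc, Equiv.swap_mul_self, mul_one]

lemma erase_filter_eq_pred (pe : Equiv.Perm (Fin n)) (p : Fin n) (hp : pe r = p) :
    (Finset.univ.erase r).filter (fun r' => pe r' < p) = pred pe r := by
  classical
  ext r'
  simp only [Finset.mem_filter, Finset.mem_erase, Finset.mem_univ, true_and, and_true, pred,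
    Finset.mem_filter]
  subst hp
  constructor
  · rintro ⟨_, h⟩
    exact h
  · intro h
    refine ⟨?_, h⟩
    intro he
    subst he
    exact lt_irrefl _ h

lemma sum_swap_count (p : Fin n) :
    ∑ r' ∈ Finset.univ.erase r,
      (Finset.univ.filter (fun pe : Equiv.Perm (Fin n) => pe r = p ∧ pe r' < p)).card
    = (Finset.univ.filter (fun pe : Equiv.Perm (Fin n) => pe r = p)).card * (p : ℕ) := by
  classical
  have h1 : ∀ r' : Fin n,
      (Finset.univ.filter (fun pe : Equiv.Perm (Fin n) => pe r = p ∧ pe r' < p)).card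
        = ∑ pe ∈ Finset.univ.filter (fun pe : Equiv.Perm (Fin n) => pe r = p),
            (if pe r' < p then 1 else 0) := by
    intro r'
    rw [← Finset.filter_filter, Finset.card_filter]
  rw [Finset.sum_congr rfl (fun r' _ => h1 r'), Finset.sum_comm]
  have h2 : ∀ pe ∈ Finset.univ.filter (fun pe : Equiv.Perm (Fin n) => pe r = p),
      (∑ r' ∈ Finset.univ.erase r, (if pe r' < p then 1 else 0)) = (p : ℕ) := by
    intro pe hpe
    rw [Finset.mem_filter] at hpe
    rw [← Finset.card_filter]
    rw [erase_filter_eq_pred r pe p hpe.2]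
    rw [card_predset r pe, hpe.2]
  rw [Finset.sum_congr rfl h2, Finset.sum_const, smul_eq_mul]

end Counting

section RowBound

variable (hnn : ∀ i j, 0 ≤ A i j) (hrow : ∀ i, ∑ j, A i j = 1)
include hnn hrow

lemma row_bound (σ : Equiv.Perm (Fin n)) (hσ : ∀ i, 0 < A i (σ i)) (r : Fin n) :
    ∑ pe : Equiv.Perm (Fin n), Real.log (mrow A σ pe r)
      ≤ (n.factorial : ℝ) * (Real.log 2 + ∑ j, (1 - A r j) * Real.log (1 - A r j)) := by
  classical
  have hA0 : 0 < A r (σ r) := hσ r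
  have hA1 : A r (σ r) ≤ 1 := entry_le_one hnn hrow r (σ r)
  set c : ℝ := ∑ r' ∈ Finset.univ.erase r, A r (σ r') with hcdef
  have hc_eq : c = 1 - A r (σ r) := by
    have := Finset.sum_erase_add Finset.univ (fun r' => A r (σ r')) (Finset.mem_univ r)
    rw [row_sum_comp hnn hrow σ r] at this
    rw [hcdef]
    linarith
  have hc0 : 0 ≤ c := Finset.sum_nonneg (fun r' _ => hnn r (σ r'))
  have hc1 : c < 1 := by rw [hc_eq]; linarith
  have hm_ge : ∀ pe : Equiv.Perm (Fin n), A r (σ r) ≤ mrow A σ pe r :=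
    fun pe => mrow_ge hnn hrow σ pe r
  have hm_pos : ∀ pe : Equiv.Perm (Fin n), 0 < mrow A σ pe r :=
    fun pe => lt_of_lt_of_le hA0 (hm_ge pe)
  have hm_le : ∀ pe : Equiv.Perm (Fin n), mrow A σ pe r ≤ 1 :=
    fun pe => mrow_le_one hnn hrow σ pe r
  by_cases hc : c = 0
  · -- concentrated row
    have hzero : ∀ j, j ≠ σ r → A r j = 0 := by
      intro j hj
      have hj' : σ.symm j ≠ r := by
        intro he
        apply hj
        rw [← he]
        simp
      have hmem : σ.symm j ∈ Finset.univ.erase r := Finset.mem_erase.mpr ⟨hj', Finset.mem_univ _⟩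
      have h0 : ∀ r' ∈ Finset.univ.erase r, A r (σ r') = 0 := by
        rw [hcdef] at hc
        intro r' hr'
        exact (Finset.sum_eq_zero_iff_of_nonneg (fun x _ => hnn r (σ x))).mp hc r' hr'
      have := h0 (σ.symm j) hmem
      rwa [Equiv.apply_symm_apply] at this
    have hAeq : A r (σ r) = 1 := by rw [hc_eq] at hc; linarith
    have hψ : ∑ j, (1 - A r j) * Real.log (1 - A r j) = 0 := by
      apply Finset.sum_eq_zero
      intro j _
      by_cases hj : j = σ r
      · rw [hj, hAeq]
        norm_num
      · rw [hzero j hj]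
        norm_num
    rw [hψ, add_zero]
    have hlog2 : (0:ℝ) ≤ Real.log 2 := Real.log_nonneg (by norm_num)
    have hle0 : ∑ pe : Equiv.Perm (Fin n), Real.log (mrow A σ pe r) ≤ 0 :=
      Finset.sum_nonpos (fun pe _ => Real.log_nonpos (hm_pos pe).le (hm_le pe))
    have : (0:ℝ) ≤ (n.factorial : ℝ) * Real.log 2 := by positivity
    linarith
  · -- spread row
    have hc0' : 0 < c := lt_of_le_of_ne hc0 (Ne.symm hc)
    have hAlt1 : A r (σ r) < 1 := by rw [hc_eq] at hc0'; linarith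
    -- n ≥ 2
    have hne : (Finset.univ.erase r).Nonempty := by
      by_contra h
      rw [Finset.not_nonempty_iff_eq_empty] at h
      rw [hcdef, h, Finset.sum_empty] at hc
      exact hc rfl
    have hn2 : 2 ≤ n := by
      have h1 : 1 ≤ (Finset.univ.erase r).card := Finset.card_pos.mpr hne
      rw [Finset.card_erase_of_mem (Finset.mem_univ r), Finset.card_univ, Fintype.card_fin] at h1
      omega
    have hn1R : (0:ℝ) < (n:ℝ) - 1 := by
      have : (2:ℝ) ≤ (n:ℝ) := by exact_mod_cast hn2
      linarith
    have hcardR : ((Finset.univ.erase r).card : ℝ) = (n:ℝ) - 1 := by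
      rw [Finset.card_erase_of_mem (Finset.mem_univ r), Finset.card_univ, Fintype.card_fin]
      rw [Nat.cast_sub (by omega)]
      simp
    -- group by fibers
    have hgroup : ∑ pe : Equiv.Perm (Fin n), Real.log (mrow A σ pe r)
        = ∑ p : Fin n, ∑ pe ∈ Finset.univ.filter (fun pe : Equiv.Perm (Fin n) => pe r = p),
            Real.log (mrow A σ pe r) := by
      rw [Finset.sum_fiberwise_of_maps_to (fun pe _ => Finset.mem_univ (pe r))]
    -- per-fiber bound
    have hfiber : ∀ p : Fin n,
        ∑ pe ∈ Finset.univ.filter (fun pe : Equiv.Perm (Fin n) => pe r = p),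
            Real.log (mrow A σ pe r)
          ≤ ((Finset.univ.filter (fun pe : Equiv.Perm (Fin n) => pe r = p)).card : ℝ)
              * Real.log (1 - c * (((p:ℕ):ℝ)/((n:ℝ)-1))) := by
      intro p
      set F := Finset.univ.filter (fun pe : Equiv.Perm (Fin n) => pe r = p) with hFdef
      set N : ℕ := F.card with hNdef
      have hNpos : 0 < N := card_fiber_pos r p (by omega)
      set μ : ℝ := 1 - c * (((p:ℕ):ℝ)/((n:ℝ)-1)) with hμdef
      have hple : ((p:ℕ):ℝ) ≤ (n:ℝ) - 1 := by
        have : ((p:ℕ):ℝ) ≤ ((n-1:ℕ):ℝ) := by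
          exact_mod_cast Nat.le_sub_one_of_lt p.isLt
        rwa [Nat.cast_sub (by omega), Nat.cast_one] at this
      have hμ_ge : 1 - c ≤ μ := by
        rw [hμdef]
        have h1 : c * (((p:ℕ):ℝ)/((n:ℝ)-1)) ≤ c * 1 := by
          apply mul_le_mul_of_nonneg_left _ hc0
          rw [div_le_one hn1R]
          exact hple
        linarith
      have hμpos : 0 < μ := by rw [hc_eq] at hμ_ge; linarith
      -- mean identity
      have hmean : ∑ pe ∈ F, mrow A σ pe r = (N:ℝ) * μ := by
        have hinner : ∀ pe ∈ F, mrow A σ pe r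
            = 1 - ∑ r' ∈ Finset.univ.erase r, (if pe r' < p then A r (σ r') else 0) := by
          intro pe hpe
          rw [Finset.mem_filter] at hpe
          rw [mrow, ← erase_filter_eq_pred r pe p hpe.2, Finset.sum_filter]
        rw [Finset.sum_congr rfl hinner, Finset.sum_sub_distrib, Finset.sum_const,
          nsmul_eq_mul, mul_one, Finset.sum_comm]
        have hcount : ∀ r' ∈ Finset.univ.erase r,
            ∑ pe ∈ F, (if pe r' < p then A r (σ r') else 0)
              = A r (σ r') * ((N:ℝ) * ((p:ℕ):ℝ) / ((n:ℝ)-1)) := by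
          intro r' hr'
          rw [← Finset.sum_filter, Finset.sum_const, nsmul_eq_mul]
          have hr'ne : r' ≠ r := (Finset.mem_erase.mp hr').1
          have hff : F.filter (fun pe => pe r' < p)
              = Finset.univ.filter (fun pe : Equiv.Perm (Fin n) => pe r = p ∧ pe r' < p) := by
            rw [hFdef, Finset.filter_filter]
          have hall : ∀ r'' ∈ Finset.univ.erase r,
              (Finset.univ.filter
                (fun pe : Equiv.Perm (Fin n) => pe r = p ∧ pe r'' < p)).card
                = (Finset.univ.filter
                  (fun pe : Equiv.Perm (Fin n) => pe r = p ∧ pe r' < p)).card :=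
            fun r'' hr'' => swap_count r (Finset.mem_erase.mp hr'').1 hr'ne p
          have hsum := sum_swap_count r p
          rw [Finset.sum_congr rfl hall, Finset.sum_const, smul_eq_mul] at hsum
          have hcard : (Finset.univ.erase r).card = n - 1 := by
            rw [Finset.card_erase_of_mem (Finset.mem_univ r), Finset.card_univ,
              Fintype.card_fin]
          rw [hcard] at hsum
          have h9 : ((n - 1 : ℕ) : ℝ) = (n:ℝ) - 1 := by
            rw [Nat.cast_sub (by omega)]; simp
          have h10 : ((n-1:ℕ):ℝ) * (((Finset.univ.filter
              (fun pe : Equiv.Perm (Fin n) => pe r = p ∧ pe r' < p)).card : ℕ) : ℝ)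
              = (N:ℝ) * ((p:ℕ):ℝ) := by
            exact_mod_cast congrArg (fun m : ℕ => (m:ℝ)) hsum
          rw [h9] at h10
          rw [hff]
          have h11 : (((Finset.univ.filter
              (fun pe : Equiv.Perm (Fin n) => pe r = p ∧ pe r' < p)).card : ℕ) : ℝ)
              = (N:ℝ) * ((p:ℕ):ℝ) / ((n:ℝ)-1) := by
            field_simp
            linarith [h10]
          rw [h11]
          ring
        rw [Finset.sum_congr rfl hcount, ← Finset.sum_mul, ← hcdef, hμdef]
        ring
      -- Jensen via log x ≤ x - 1
      have hjensen : ∀ pe ∈ F, Real.log (mrow A σ pe r)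
          ≤ Real.log μ + (mrow A σ pe r - μ)/μ := by
        intro pe _
        have h1 : Real.log (mrow A σ pe r / μ) ≤ mrow A σ pe r / μ - 1 :=
          Real.log_le_sub_one_of_pos (div_pos (hm_pos pe) hμpos)
        rw [Real.log_div (ne_of_gt (hm_pos pe)) (ne_of_gt hμpos)] at h1
        have h2 : mrow A σ pe r / μ - 1 = (mrow A σ pe r - μ)/μ := by
          field_simp
        rw [h2] at h1
        linarith
      calc ∑ pe ∈ F, Real.log (mrow A σ pe r)
          ≤ ∑ pe ∈ F, (Real.log μ + (mrow A σ pe r - μ)/μ) := Finset.sum_le_sum hjensen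
        _ = (N:ℝ) * Real.log μ + ((∑ pe ∈ F, mrow A σ pe r) - (N:ℝ)*μ)/μ := by
            rw [Finset.sum_add_distrib, Finset.sum_const, nsmul_eq_mul]
            rw [← Finset.sum_div, Finset.sum_sub_distrib, Finset.sum_const, nsmul_eq_mul]
        _ = (N:ℝ) * Real.log μ := by
            rw [hmean]
            simp
    -- combine fibers
    have hNval : ∀ p : Fin n,
        (((Finset.univ.filter (fun pe : Equiv.Perm (Fin n) => pe r = p)).card : ℕ) : ℝ)
          = (n.factorial : ℝ) / (n:ℝ) := by
      intro p
      have h := card_fiber_mul r p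
      have hnR : (0:ℝ) < (n:ℝ) := by
        have : (0:ℕ) < n := by omega
        exact_mod_cast this
      have h' : (((Finset.univ.filter
          (fun pe : Equiv.Perm (Fin n) => pe r = p)).card : ℕ) : ℝ) * (n:ℝ)
          = (n.factorial : ℝ) := by exact_mod_cast congrArg (fun m : ℕ => (m:ℝ)) h
      field_simp
      linarith [h']
    have hfr : (0:ℝ) ≤ (n.factorial : ℝ) := by positivity
    have hchain1 : ∑ pe : Equiv.Perm (Fin n), Real.log (mrow A σ pe r)
        ≤ (n.factorial : ℝ) * ((n:ℝ)⁻¹ *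
            ∑ q ∈ Finset.range n, Real.log (1 - c*((q:ℝ)/((n:ℝ)-1)))) := by
      rw [hgroup]
      calc ∑ p : Fin n, ∑ pe ∈ Finset.univ.filter
            (fun pe : Equiv.Perm (Fin n) => pe r = p), Real.log (mrow A σ pe r)
          ≤ ∑ p : Fin n, (((Finset.univ.filter
              (fun pe : Equiv.Perm (Fin n) => pe r = p)).card : ℕ) : ℝ)
                * Real.log (1 - c * (((p:ℕ):ℝ)/((n:ℝ)-1))) :=
            Finset.sum_le_sum (fun p _ => hfiber p)
        _ = ∑ p : Fin n, ((n.factorial : ℝ) / (n:ℝ))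
              * Real.log (1 - c * (((p:ℕ):ℝ)/((n:ℝ)-1))) := by
            exact Finset.sum_congr rfl (fun p _ => by rw [hNval p])
        _ = ((n.factorial : ℝ) / (n:ℝ)) *
              ∑ p : Fin n, Real.log (1 - c * (((p:ℕ):ℝ)/((n:ℝ)-1))) := by
            rw [Finset.mul_sum]
        _ = (n.factorial : ℝ) * ((n:ℝ)⁻¹ *
              ∑ q ∈ Finset.range n, Real.log (1 - c*((q:ℝ)/((n:ℝ)-1)))) := by
            rw [Fin.sum_univ_eq_sum_range
              (fun q => Real.log (1 - c*((q:ℝ)/((n:ℝ)-1))))]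
            ring
    have hchain2 := sum_le_int hc0' hc1 hn2
    have hchain3 := sv3 hc0' hc1
    -- psi accounting
    have hpsi : Real.log 2 + c * Real.log c - c
        ≤ Real.log 2 + ∑ j, (1 - A r j) * Real.log (1 - A r j) := by
      have hsplit := Finset.sum_erase_add Finset.univ
        (fun j => (1 - A r j) * Real.log (1 - A r j)) (Finset.mem_univ (σ r))
      have hrowsplit := Finset.sum_erase_add Finset.univ
        (fun j => A r j) (Finset.mem_univ (σ r))
      rw [hrow r] at hrowsplit
      have hsum_erase : ∑ j ∈ Finset.univ.erase (σ r), A r j = c := by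
        rw [hc_eq]; linarith
      have hterm : (1 - A r (σ r)) * Real.log (1 - A r (σ r)) = c * Real.log c := by
        rw [← hc_eq]
      have hge : ∀ j ∈ Finset.univ.erase (σ r),
          -(A r j) ≤ (1 - A r j) * Real.log (1 - A r j) := by
        intro j _
        have := psi_ge (hnn r j) (entry_le_one hnn hrow r j)
        linarith
      have h12 : ∑ j ∈ Finset.univ.erase (σ r), -(A r j)
          ≤ ∑ j ∈ Finset.univ.erase (σ r), (1 - A r j) * Real.log (1 - A r j) :=
        Finset.sum_le_sum hge
      rw [Finset.sum_neg_distrib, hsum_erase] at h12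
      have h13 : ∑ j, (1 - A r j) * Real.log (1 - A r j)
          = (∑ j ∈ Finset.univ.erase (σ r), (1 - A r j) * Real.log (1 - A r j))
            + c * Real.log c := by
        rw [← hterm, hsplit]
      rw [h13]
      linarith
    calc ∑ pe : Equiv.Perm (Fin n), Real.log (mrow A σ pe r)
        ≤ (n.factorial : ℝ) * ((n:ℝ)⁻¹ *
            ∑ q ∈ Finset.range n, Real.log (1 - c*((q:ℝ)/((n:ℝ)-1)))) := hchain1
      _ ≤ (n.factorial : ℝ) * (-(((1-c) * Real.log (1-c) - (1-c) + 1)/c)) :=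
          mul_le_mul_of_nonneg_left hchain2 hfr
      _ ≤ (n.factorial : ℝ) * (Real.log 2 + c * Real.log c - c) :=
          mul_le_mul_of_nonneg_left hchain3 hfr
      _ ≤ (n.factorial : ℝ) * (Real.log 2 + ∑ j, (1 - A r j) * Real.log (1 - A r j)) :=
          mul_le_mul_of_nonneg_left hpsi hfr

end RowBound

section LemA

variable (hnn : ∀ i j, 0 ≤ A i j) (hrow : ∀ i, ∑ j, A i j = 1)
include hnn hrow

lemma lemA (ord : Equiv.Perm (Fin n)) :
    ∑ σ ∈ Finset.univ.filter (fun σ : Equiv.Perm (Fin n) => 0 < w A σ),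
      w A σ / Mm A σ ord ≤ 1 := by
  classical
  set b : ℕ → Fin n → ℝ := fun q j => if h : q < n then A (ord.symm ⟨q, h⟩) j else 0 with hbdef
  have hb : ∀ i j, 0 ≤ b i j := by
    intro i j
    rw [hbdef]
    dsimp only
    split
    · exact hnn _ _
    · exact le_refl 0
  set Φ : Equiv.Perm (Fin n) → (Fin n → Fin n) := fun σ p => σ (ord.symm p) with hΦdef
  have hΦinj : ∀ σ : Equiv.Perm (Fin n), Function.Injective (Φ σ) := by
    intro σ p q h
    rw [hΦdef] at h
    exact ord.symm.injective (σ.injective h)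
  have hbp : ∀ (p : Fin n) (j : Fin n), b (p:ℕ) j = A (ord.symm p) j := by
    intro p j
    rw [hbdef]
    dsimp only
    rw [dif_pos p.isLt]
  have hvalid : ∀ σ : Equiv.Perm (Fin n), ∀ p : Fin n,
      Φ σ p ∈ avail Finset.univ (Φ σ) p := by
    intro σ p
    rw [avail, Finset.mem_sdiff]
    refine ⟨Finset.mem_univ _, ?_⟩
    intro hmem
    rw [Finset.mem_image] at hmem
    obtain ⟨q, hq, hqe⟩ := hmem
    rw [Finset.mem_filter] at hq
    exact absurd (hΦinj σ hqe) (ne_of_lt hq.2)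
  have hden : ∀ (σ : Equiv.Perm (Fin n)) (p : Fin n),
      ∑ j ∈ avail Finset.univ (Φ σ) p, b (p:ℕ) j = mrow A σ ord (ord.symm p) := by
    intro σ p
    rw [Finset.sum_congr rfl (fun j _ => hbp p j)]
    rw [avail]
    rw [Finset.sum_sdiff_eq_sub (Finset.subset_univ _)]
    rw [hrow (ord.symm p)]
    rw [Finset.sum_image (fun q _ q' _ h => hΦinj σ h)]
    rw [mrow]
    congr 1
    apply Finset.sum_nbij' (fun q => ord.symm q) (fun r' => ord r')
    · intro q hq
      rw [Finset.mem_filter] at hq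
      rw [pred, Finset.mem_filter]
      refine ⟨Finset.mem_univ _, ?_⟩
      rw [Equiv.apply_symm_apply, Equiv.apply_symm_apply]
      exact hq.2
    · intro r' hr'
      rw [pred, Finset.mem_filter] at hr'
      rw [Finset.mem_filter]
      refine ⟨Finset.mem_univ _, ?_⟩
      rw [Equiv.apply_symm_apply] at hr'
      exact hr'.2
    · intro q _
      simp
    · intro r' _
      simp
    · intro q _
      rw [hΦdef]
  have hterm : ∀ σ : Equiv.Perm (Fin n),
      term b Finset.univ (Φ σ) = w A σ / Mm A σ ord := by
    intro σ
    rw [term]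
    have hstep : ∀ p : Fin n,
        b (p:ℕ) (Φ σ p) / (∑ j ∈ avail Finset.univ (Φ σ) p, b (p:ℕ) j)
          = A (ord.symm p) (σ (ord.symm p)) / mrow A σ ord (ord.symm p) := by
      intro p
      rw [hden σ p, hbp p (Φ σ p)]
    rw [Finset.prod_congr rfl (fun p _ => hstep p)]
    rw [Finset.prod_div_distrib]
    rw [Equiv.prod_comp ord.symm (fun r => A r (σ r)),
      Equiv.prod_comp ord.symm (fun r => mrow A σ ord r)]
    rfl
  have hΦinj2 : Set.InjOn Φ ↑(Finset.univ.filter (fun σ : Equiv.Perm (Fin n) => 0 < w A σ)) := by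
    intro σ1 _ σ2 _ h
    refine Equiv.ext (fun r => ?_)
    have := congrFun h (ord r)
    rw [hΦdef] at this
    simpa using this
  calc ∑ σ ∈ Finset.univ.filter (fun σ : Equiv.Perm (Fin n) => 0 < w A σ),
        w A σ / Mm A σ ord
      = ∑ σ ∈ Finset.univ.filter (fun σ : Equiv.Perm (Fin n) => 0 < w A σ),
          term b Finset.univ (Φ σ) :=
        Finset.sum_congr rfl (fun σ _ => (hterm σ).symm)
    _ = ∑ f ∈ (Finset.univ.filter
          (fun σ : Equiv.Perm (Fin n) => 0 < w A σ)).image Φ, term b Finset.univ f :=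
        (Finset.sum_image (fun σ1 h1 σ2 h2 h => hΦinj2 h1 h2 h)).symm
    _ ≤ ∑ f ∈ Finset.univ.filter
          (fun f : Fin n → Fin n => ∀ p, f p ∈ avail Finset.univ f p), term b Finset.univ f := by
        apply Finset.sum_le_sum_of_subset_of_nonneg
        · intro f hf
          rw [Finset.mem_image] at hf
          obtain ⟨σ, _, rfl⟩ := hf
          rw [Finset.mem_filter]
          exact ⟨Finset.mem_univ _, hvalid σ⟩
        · intro f _ _
          exact term_nonneg hb Finset.univ f
    _ ≤ 1 := seq n b hb Finset.univ

end LemA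

lemma log_g {a : ℝ} (h0 : 0 ≤ a) (h1 : a ≤ 1) :
    Real.log ((1 - a) ^ (1 - a)) = (1 - a) * Real.log (1 - a) := by
  rcases eq_or_lt_of_le h1 with rfl | h
  · norm_num
  · rw [Real.log_rpow (by linarith)]

lemma g_pos {a : ℝ} (h0 : 0 ≤ a) (h1 : a ≤ 1) : 0 < (1 - a) ^ (1 - a) := by
  rcases eq_or_lt_of_le h1 with rfl | h
  · norm_num
  · exact Real.rpow_pos_of_pos (by linarith) _

lemma w_nonneg (hnn : ∀ i j, 0 ≤ A i j) (σ : Equiv.Perm (Fin n)) : 0 ≤ w A σ :=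
  Finset.prod_nonneg (fun i _ => hnn i (σ i))

lemma w_pos_entries (hnn : ∀ i j, 0 ≤ A i j) {σ : Equiv.Perm (Fin n)} (h : 0 < w A σ) :
    ∀ i, 0 < A i (σ i) := by
  intro i
  rcases eq_or_lt_of_le (hnn i (σ i)) with he | hlt
  · exfalso
    have : w A σ = 0 := Finset.prod_eq_zero (Finset.mem_univ i) he.symm
    rw [this] at h
    exact lt_irrefl 0 h
  · exact hlt

end Stmt2Aux

theorem stmt_2 {n : ℕ} (A : Matrix (Fin n) (Fin n) ℝ)
    (hnn : ∀ i j, 0 ≤ A i j)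
    (hrow : ∀ i, ∑ j, A i j = 1) :
    perm A ≤ 2 ^ n * ∏ i, ∏ j, (1 - A i j) ^ (1 - A i j) := by
  classical
  open Stmt2Aux in
  set B : ℝ := 2 ^ n * ∏ i, ∏ j, (1 - A i j) ^ (1 - A i j) with hBdef
  have hent1 : ∀ i j, A i j ≤ 1 := Stmt2Aux.entry_le_one hnn hrow
  have hprodpos : (0:ℝ) < ∏ i, ∏ j, (1 - A i j) ^ (1 - A i j) :=
    Finset.prod_pos (fun i _ => Finset.prod_pos
      (fun j _ => Stmt2Aux.g_pos (hnn i j) (hent1 i j)))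
  have hBpos : 0 < B := by
    rw [hBdef]
    positivity
  have hlogB : Real.log B = (n:ℝ) * Real.log 2
      + ∑ i, ∑ j, (1 - A i j) * Real.log (1 - A i j) := by
    rw [hBdef, Real.log_mul (by positivity) (ne_of_gt hprodpos), Real.log_pow]
    congr 1
    rw [Real.log_prod (fun i _ => ne_of_gt (Finset.prod_pos
      (fun j _ => Stmt2Aux.g_pos (hnn i j) (hent1 i j))))]
    apply Finset.sum_congr rfl
    intro i _
    rw [Real.log_prod (fun j _ => ne_of_gt (Stmt2Aux.g_pos (hnn i j) (hent1 i j)))]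
    exact Finset.sum_congr rfl (fun j _ => Stmt2Aux.log_g (hnn i j) (hent1 i j))
  set S : Finset (Equiv.Perm (Fin n)) :=
    Finset.univ.filter (fun σ : Equiv.Perm (Fin n) => 0 < Stmt2Aux.w A σ) with hSdef
  have hperm : perm A = ∑ σ ∈ S, Stmt2Aux.w A σ := by
    rw [hSdef]
    rw [Finset.sum_filter_of_ne]
    · rfl
    · intro σ _ hne
      rcases eq_or_lt_of_le (Stmt2Aux.w_nonneg hnn σ) with he | hlt
      · exact absurd he.symm hne
      · exact hlt
  set P : ℝ := ∑ σ ∈ S, Stmt2Aux.w A σ with hPdef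
  have hPnn : 0 ≤ P :=
    Finset.sum_nonneg (fun σ _ => Stmt2Aux.w_nonneg hnn σ)
  rcases eq_or_lt_of_le hPnn with hP0 | hPpos
  · rw [hperm, ← hP0]
    exact hBpos.le
  · -- main case
    have hfacpos : (0:ℝ) < (n.factorial : ℝ) := by
      exact_mod_cast Nat.factorial_pos n
    have hMmpos : ∀ σ ∈ S, ∀ ord : Equiv.Perm (Fin n), 0 < Stmt2Aux.Mm A σ ord := by
      intro σ hσ ord
      rw [hSdef, Finset.mem_filter] at hσ
      have hσe := Stmt2Aux.w_pos_entries hnn hσ.2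
      exact Finset.prod_pos (fun r _ =>
        lt_of_lt_of_le (hσe r) (Stmt2Aux.mrow_ge hnn hrow σ ord r))
    set Mt : Equiv.Perm (Fin n) → ℝ := fun σ =>
      Real.exp ((n.factorial : ℝ)⁻¹ *
        ∑ ord : Equiv.Perm (Fin n), Real.log (Stmt2Aux.Mm A σ ord)) with hMtdef
    have hMtpos : ∀ σ, 0 < Mt σ := fun σ => Real.exp_pos _
    -- Mt ≤ B on S
    have hMtleB : ∀ σ ∈ S, Mt σ ≤ B := by
      intro σ hσ
      rw [hSdef, Finset.mem_filter] at hσ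
      have hσe := Stmt2Aux.w_pos_entries hnn hσ.2
      have hlogsum : ∀ ord : Equiv.Perm (Fin n),
          Real.log (Stmt2Aux.Mm A σ ord) = ∑ r, Real.log (Stmt2Aux.mrow A σ ord r) := by
        intro ord
        rw [Stmt2Aux.Mm]
        rw [Real.log_prod]
        intro r _
        exact ne_of_gt (lt_of_lt_of_le (hσe r) (Stmt2Aux.mrow_ge hnn hrow σ ord r))
      have hkey : ∑ ord : Equiv.Perm (Fin n), Real.log (Stmt2Aux.Mm A σ ord)
          ≤ (n.factorial : ℝ) * Real.log B := by
        rw [Finset.sum_congr rfl (fun ord _ => hlogsum ord), Finset.sum_comm]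
        calc ∑ r : Fin n, ∑ ord : Equiv.Perm (Fin n), Real.log (Stmt2Aux.mrow A σ ord r)
            ≤ ∑ r : Fin n, (n.factorial : ℝ) *
                (Real.log 2 + ∑ j, (1 - A r j) * Real.log (1 - A r j)) :=
              Finset.sum_le_sum (fun r _ => Stmt2Aux.row_bound hnn hrow σ hσe r)
          _ = (n.factorial : ℝ) * Real.log B := by
              rw [← Finset.mul_sum, hlogB, Finset.sum_add_distrib, Finset.sum_const,
                Finset.card_univ, Fintype.card_fin, nsmul_eq_mul]
      rw [hMtdef]
      dsimp only
      rw [← Real.exp_log hBpos]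
      apply Real.exp_le_exp.mpr
      calc (n.factorial : ℝ)⁻¹ * ∑ ord : Equiv.Perm (Fin n), Real.log (Stmt2Aux.Mm A σ ord)
          ≤ (n.factorial : ℝ)⁻¹ * ((n.factorial : ℝ) * Real.log B) := by
            apply mul_le_mul_of_nonneg_left hkey (by positivity)
        _ = Real.log B := by
            field_simp
    -- w / Mt σ ≤ average of w / Mm
    have hdivle : ∀ σ ∈ S, Stmt2Aux.w A σ / Mt σ
        ≤ (n.factorial : ℝ)⁻¹ *
            ∑ ord : Equiv.Perm (Fin n), Stmt2Aux.w A σ / Stmt2Aux.Mm A σ ord := by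
      intro σ hσ
      have hσS := hσ
      rw [hSdef, Finset.mem_filter] at hσ
      have hwpos : 0 < Stmt2Aux.w A σ := hσ.2
      set z : Equiv.Perm (Fin n) → ℝ := fun ord => Stmt2Aux.w A σ / Stmt2Aux.Mm A σ ord
        with hzdef
      have hzpos : ∀ ord, 0 < z ord := fun ord => div_pos hwpos (hMmpos σ hσS ord)
      set μ : ℝ := (n.factorial : ℝ)⁻¹ * ∑ ord : Equiv.Perm (Fin n), z ord with hμdef
      have hcardP : (Finset.univ : Finset (Equiv.Perm (Fin n))).card = n.factorial := by
        rw [Finset.card_univ, Fintype.card_perm, Fintype.card_fin]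
      have hsumz : (0:ℝ) < ∑ ord : Equiv.Perm (Fin n), z ord :=
        Finset.sum_pos (fun ord _ => hzpos ord) Finset.univ_nonempty
      have hμpos : 0 < μ := by
        rw [hμdef]
        positivity
      have hsummu : ∑ ord : Equiv.Perm (Fin n), z ord = (n.factorial : ℝ) * μ := by
        rw [hμdef]
        field_simp
      have hlogz : ∑ ord : Equiv.Perm (Fin n), Real.log (z ord)
          ≤ (n.factorial : ℝ) * Real.log μ := by
        have hstep : ∀ ord : Equiv.Perm (Fin n),
            Real.log (z ord) ≤ Real.log μ + (z ord - μ)/μ := by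
          intro ord
          have h1 : Real.log (z ord / μ) ≤ z ord / μ - 1 :=
            Real.log_le_sub_one_of_pos (div_pos (hzpos ord) hμpos)
          rw [Real.log_div (ne_of_gt (hzpos ord)) (ne_of_gt hμpos)] at h1
          have h2 : z ord / μ - 1 = (z ord - μ)/μ := by field_simp
          rw [h2] at h1
          linarith
        calc ∑ ord : Equiv.Perm (Fin n), Real.log (z ord)
            ≤ ∑ ord : Equiv.Perm (Fin n), (Real.log μ + (z ord - μ)/μ) :=
              Finset.sum_le_sum (fun ord _ => hstep ord)
          _ = (n.factorial : ℝ) * Real.log μ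
              + ((∑ ord : Equiv.Perm (Fin n), z ord) - (n.factorial : ℝ) * μ)/μ := by
              rw [Finset.sum_add_distrib, Finset.sum_const, hcardP, nsmul_eq_mul,
                ← Finset.sum_div, Finset.sum_sub_distrib, Finset.sum_const, hcardP,
                nsmul_eq_mul]
          _ = (n.factorial : ℝ) * Real.log μ := by
              rw [hsummu]
              simp
      have hwMt : Stmt2Aux.w A σ / Mt σ
          = Real.exp ((n.factorial : ℝ)⁻¹ *
              ∑ ord : Equiv.Perm (Fin n), Real.log (z ord)) := by
        rw [hzdef]
        simp only []
        rw [Finset.sum_congr rfl (fun ord _ =>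
          Real.log_div (ne_of_gt hwpos) (ne_of_gt (hMmpos σ hσS ord)))]
        rw [Finset.sum_sub_distrib, Finset.sum_const, hcardP, nsmul_eq_mul]
        rw [mul_sub, Real.exp_sub]
        rw [hMtdef]
        dsimp only
        congr 1
        rw [← mul_assoc, inv_mul_cancel₀ (ne_of_gt hfacpos), one_mul, Real.exp_log hwpos]
      rw [hwMt]
      calc Real.exp ((n.factorial : ℝ)⁻¹ * ∑ ord : Equiv.Perm (Fin n), Real.log (z ord))
          ≤ Real.exp ((n.factorial : ℝ)⁻¹ * ((n.factorial : ℝ) * Real.log μ)) := by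
            apply Real.exp_le_exp.mpr
            apply mul_le_mul_of_nonneg_left hlogz (by positivity)
        _ = μ := by
            rw [← mul_assoc, inv_mul_cancel₀ (ne_of_gt hfacpos), one_mul, Real.exp_log hμpos]
    -- sum of w/Mt over S is at most 1
    have hsum1 : ∑ σ ∈ S, Stmt2Aux.w A σ / Mt σ ≤ 1 := by
      have hcardP : (Finset.univ : Finset (Equiv.Perm (Fin n))).card = n.factorial := by
        rw [Finset.card_univ, Fintype.card_perm, Fintype.card_fin]
      calc ∑ σ ∈ S, Stmt2Aux.w A σ / Mt σ
          ≤ ∑ σ ∈ S, (n.factorial : ℝ)⁻¹ *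
              ∑ ord : Equiv.Perm (Fin n), Stmt2Aux.w A σ / Stmt2Aux.Mm A σ ord :=
            Finset.sum_le_sum hdivle
        _ = (n.factorial : ℝ)⁻¹ * ∑ ord : Equiv.Perm (Fin n),
              ∑ σ ∈ S, Stmt2Aux.w A σ / Stmt2Aux.Mm A σ ord := by
            rw [← Finset.mul_sum, Finset.sum_comm]
        _ ≤ (n.factorial : ℝ)⁻¹ * ∑ ord : Equiv.Perm (Fin n), 1 := by
            apply mul_le_mul_of_nonneg_left _ (by positivity)
            exact Finset.sum_le_sum (fun ord _ => Stmt2Aux.lemA hnn hrow ord)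
        _ = 1 := by
            rw [Finset.sum_const, hcardP, nsmul_eq_mul, mul_one]
            field_simp
    -- Cauchy-Schwarz
    have hCS := Finset.sum_mul_sq_le_sq_mul_sq S
      (fun σ => Real.sqrt (Stmt2Aux.w A σ / Mt σ))
      (fun σ => Real.sqrt (Stmt2Aux.w A σ * Mt σ))
    have hfg : ∀ σ ∈ S,
        Real.sqrt (Stmt2Aux.w A σ / Mt σ) * Real.sqrt (Stmt2Aux.w A σ * Mt σ)
          = Stmt2Aux.w A σ := by
      intro σ hσ
      rw [← Real.sqrt_mul (div_nonneg (Stmt2Aux.w_nonneg hnn σ) (hMtpos σ).le)]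
      have : Stmt2Aux.w A σ / Mt σ * (Stmt2Aux.w A σ * Mt σ) = (Stmt2Aux.w A σ)^2 := by
        field_simp
        exact mul_div_cancel_right₀ _ (hMtpos σ).ne'
      rw [this, Real.sqrt_sq (Stmt2Aux.w_nonneg hnn σ)]
    have hf2 : ∀ σ ∈ S, (Real.sqrt (Stmt2Aux.w A σ / Mt σ))^2 = Stmt2Aux.w A σ / Mt σ := by
      intro σ _
      exact Real.sq_sqrt (div_nonneg (Stmt2Aux.w_nonneg hnn σ) (hMtpos σ).le)
    have hg2 : ∀ σ ∈ S, (Real.sqrt (Stmt2Aux.w A σ * Mt σ))^2 = Stmt2Aux.w A σ * Mt σ := by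
      intro σ _
      exact Real.sq_sqrt (mul_nonneg (Stmt2Aux.w_nonneg hnn σ) (hMtpos σ).le)
    rw [Finset.sum_congr rfl hfg, Finset.sum_congr rfl hf2, Finset.sum_congr rfl hg2] at hCS
    have hsum2 : ∑ σ ∈ S, Stmt2Aux.w A σ * Mt σ ≤ B * P := by
      rw [hPdef, Finset.mul_sum]
      apply Finset.sum_le_sum
      intro σ hσ
      rw [mul_comm B (Stmt2Aux.w A σ)]
      exact mul_le_mul_of_nonneg_left (hMtleB σ hσ) (Stmt2Aux.w_nonneg hnn σ)
    have hPP : P^2 ≤ B * P := by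
      calc P^2 = (∑ σ ∈ S, Stmt2Aux.w A σ)^2 := by rw [hPdef]
        _ ≤ (∑ σ ∈ S, Stmt2Aux.w A σ / Mt σ) * (∑ σ ∈ S, Stmt2Aux.w A σ * Mt σ) := hCS
        _ ≤ 1 * (∑ σ ∈ S, Stmt2Aux.w A σ * Mt σ) := by
            apply mul_le_mul_of_nonneg_right hsum1
            exact Finset.sum_nonneg (fun σ _ =>
              mul_nonneg (Stmt2Aux.w_nonneg hnn σ) (hMtpos σ).le)
        _ = ∑ σ ∈ S, Stmt2Aux.w A σ * Mt σ := one_mul _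
        _ ≤ B * P := hsum2
    have hfinal : P ≤ B := by
      have h1 : P * P ≤ B * P := by
        rw [← sq]
        exact hPP
      exact le_of_mul_le_mul_right h1 hPpos
    rw [hperm]
    exact hfinal
end

section
/- Let x = (x_1,...,x_n) be a stochastic vector (nonnegative entries summing to 1) and let y = x_1. Then ∏_{k=1}^n (1-x_k)^{1-x_k} ≥ (1-y)^{1-y} / e^{1-y}. -/
open scoped BigOperators

theorem stmt_4 {n : ℕ} (hn : 0 < n) (x : Fin n → ℝ)
    (hx : ∀ k, 0 ≤ x k) (hsum : ∑ k, x k = 1) :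
    ∏ k, (1 - x k) ^ (1 - x k) ≥
      (1 - x ⟨0, hn⟩) ^ (1 - x ⟨0, hn⟩) / Real.exp (1 - x ⟨0, hn⟩) := by
  set i : Fin n := ⟨0, hn⟩
  have hle : ∀ k, x k ≤ 1 := by
    intro k
    calc x k ≤ ∑ j, x j := Finset.single_le_sum (fun j _ => hx j) (Finset.mem_univ k)
      _ = 1 := hsum
  have key : ∀ t : ℝ, 0 ≤ t → Real.exp (t - 1) ≤ t ^ t := by
    intro t ht
    rcases eq_or_lt_of_le ht with h | h
    · rw [← h, Real.rpow_zero]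
      exact Real.exp_le_one_iff.mpr (by norm_num)
    · rw [Real.rpow_def_of_pos h, Real.exp_le_exp]
      have h1 : Real.log (1 / t) ≤ 1 / t - 1 := Real.log_le_sub_one_of_pos (by positivity)
      rw [Real.log_div one_ne_zero (ne_of_gt h), Real.log_one] at h1
      have ht' : t ≠ 0 := ne_of_gt h
      have : -(Real.log t) * t ≤ (1 / t - 1) * t := by
        apply mul_le_mul_of_nonneg_right _ ht
        linarith
      have h2 : (1 / t) * t = 1 := by field_simp
      nlinarith
  have hprodle : ∀ k ∈ Finset.univ.erase i, Real.exp (-(x k)) ≤ (1 - x k) ^ (1 - x k) := by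
    intro k _
    have := key (1 - x k) (by linarith [hle k])
    simpa using this
  have hsum' : ∑ k ∈ Finset.univ.erase i, x k = 1 - x i := by
    rw [Finset.sum_erase_eq_sub (Finset.mem_univ i), hsum]
  calc ∏ k, (1 - x k) ^ (1 - x k)
      = (1 - x i) ^ (1 - x i) * ∏ k ∈ Finset.univ.erase i, (1 - x k) ^ (1 - x k) :=
        (Finset.mul_prod_erase _ _ (Finset.mem_univ i)).symm
    _ ≥ (1 - x i) ^ (1 - x i) * ∏ k ∈ Finset.univ.erase i, Real.exp (-(x k)) := by
        apply mul_le_mul_of_nonneg_left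
        · exact Finset.prod_le_prod (fun k _ => (Real.exp_pos _).le) hprodle
        · exact Real.rpow_nonneg (by linarith [hle i]) _
    _ = (1 - x i) ^ (1 - x i) * Real.exp (-(1 - x i)) := by
        rw [← Real.exp_sum]
        congr 1
        rw [Finset.sum_neg_distrib, hsum']
    _ = (1 - x i) ^ (1 - x i) / Real.exp (1 - x i) := by
        rw [Real.exp_neg, div_eq_mul_inv]
end

section
/- For every y ∈ [0,1], the function f(y) = y·e^{1-y} / (1-y)^{1-y} satisfies f(y) ≤ e^{1/e}. -/
theorem stmt_5 (y : ℝ) (hy : y ∈ Set.Icc (0:ℝ) 1) :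
    y * Real.exp (1 - y) / (1 - y) ^ (1 - y) ≤ Real.exp (1 / Real.exp 1) := by
  obtain ⟨h0, h1⟩ := hy
  set t : ℝ := 1 - y with ht
  have ht0 : 0 ≤ t := by linarith
  have ht1 : t ≤ 1 := by linarith
  -- numerator ≤ 1
  have hnum : y * Real.exp t ≤ 1 := by
    have h := Real.add_one_le_exp (y - 1)
    have hy' : y ≤ Real.exp (y - 1) := by linarith
    calc y * Real.exp t ≤ Real.exp (y - 1) * Real.exp t := by
          apply mul_le_mul_of_nonneg_right hy' (Real.exp_pos t).le
      _ = Real.exp ((y - 1) + t) := (Real.exp_add _ _).symm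
      _ = 1 := by rw [ht]; norm_num
  -- denominator ≥ exp (-(1/e))
  have hden : Real.exp (-(1 / Real.exp 1)) ≤ t ^ t := by
    rcases eq_or_lt_of_le ht0 with h | h
    · rw [← h, Real.rpow_zero]
      exact Real.exp_le_one_iff.mpr (neg_nonpos.mpr (by positivity))
    · rw [Real.rpow_def_of_pos h]
      apply Real.exp_le_exp.mpr
      have het : 0 < Real.exp 1 * t := by positivity
      have hlog : Real.log (1 / (Real.exp 1 * t)) ≤ 1 / (Real.exp 1 * t) - 1 :=
        Real.log_le_sub_one_of_pos (by positivity)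
      rw [Real.log_div one_ne_zero het.ne', Real.log_one,
        Real.log_mul (Real.exp_pos 1).ne' h.ne', Real.log_exp] at hlog
      -- hlog : 0 - (1 + log t) ≤ 1/(e t) - 1, i.e. -log t ≤ 1/(e t)
      have h2 : -Real.log t ≤ 1 / (Real.exp 1 * t) := by linarith
      have h3 : t * (-Real.log t) ≤ t * (1 / (Real.exp 1 * t)) :=
        mul_le_mul_of_nonneg_left h2 h.le
      have heq : t * (1 / (Real.exp 1 * t)) = 1 / Real.exp 1 := by
        field_simp
      rw [heq] at h3
      linarith
  have hdenpos : (0:ℝ) < t ^ t := lt_of_lt_of_le (Real.exp_pos _) hden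
  rw [div_le_iff₀ hdenpos]
  calc y * Real.exp t ≤ 1 := hnum
    _ = Real.exp (1 / Real.exp 1) * Real.exp (-(1 / Real.exp 1)) := by
        rw [← Real.exp_add]; norm_num
    _ ≤ Real.exp (1 / Real.exp 1) * t ^ t := by
        apply mul_le_mul_of_nonneg_left hden (Real.exp_pos _).le
end

section
/- For every stochastic vector x = (x_1,...,x_n) (nonnegative entries summing to 1), each entry satisfies x_j / ∏_{k=1}^n (1-x_k)^{1-x_k} ≤ e^{1/e}. -/
open scoped BigOperators

-- For t ∈ [0,1]: exp(-t) ≤ (1-t)^(1-t)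
lemma aux_exp_neg_le {t : ℝ} (h0 : 0 ≤ t) (h1 : t ≤ 1) :
    Real.exp (-t) ≤ (1 - t) ^ (1 - t) := by
  rcases eq_or_lt_of_le h1 with h | h
  · subst h
    simp only [sub_self, Real.rpow_zero]
    exact Real.exp_le_one_iff.mpr (by norm_num)
  · have hs : 0 < 1 - t := by linarith
    rw [← Real.exp_log (Real.rpow_pos_of_pos hs _), Real.log_rpow hs, Real.exp_le_exp]
    -- need -t ≤ (1-t) * log(1-t)
    have hinv : (0:ℝ) < (1 - t)⁻¹ := by positivity
    have := Real.log_le_sub_one_of_pos hinv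
    rw [Real.log_inv] at this
    have hlog : 1 - (1 - t)⁻¹ ≤ Real.log (1 - t) := by linarith
    have : (1 - t) * (1 - (1 - t)⁻¹) ≤ (1 - t) * Real.log (1 - t) :=
      mul_le_mul_of_nonneg_left hlog hs.le
    have hexp : (1 - t) * (1 - (1 - t)⁻¹) = -t := by
      field_simp
      ring
    linarith [hexp ▸ this]

-- For t ∈ [0,1]: exp(-1/e) ≤ t^t
lemma aux_tt_ge {t : ℝ} (h0 : 0 ≤ t) (h1 : t ≤ 1) :
    Real.exp (-(1 / Real.exp 1)) ≤ t ^ t := by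
  rcases eq_or_lt_of_le h0 with h | h
  · rw [← h]
    simp only [Real.rpow_zero]
    exact Real.exp_le_one_iff.mpr (neg_nonpos.mpr (by positivity))
  · rw [← Real.exp_log (Real.rpow_pos_of_pos h _), Real.log_rpow h, Real.exp_le_exp]
    -- need -(1/e) ≤ t * log t
    set u : ℝ := -Real.log t with hu
    have hu0 : 0 ≤ u := by
      simp only [hu, neg_nonneg]
      exact Real.log_nonpos h0 h1
    have ht : t = Real.exp (-u) := by
      rw [hu, neg_neg, Real.exp_log h]
    have key : u * Real.exp (-u) ≤ Real.exp (-1) := by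
      have h2 : u ≤ Real.exp (u - 1) := by
        have := Real.add_one_le_exp (u - 1)
        linarith
      calc u * Real.exp (-u) ≤ Real.exp (u - 1) * Real.exp (-u) :=
            mul_le_mul_of_nonneg_right h2 (Real.exp_pos _).le
        _ = Real.exp (-1) := by rw [← Real.exp_add]; ring_nf
    have he : Real.exp (-1) = 1 / Real.exp 1 := by
      rw [Real.exp_neg]; exact inv_eq_one_div _
    have : t * Real.log t = -(u * Real.exp (-u)) := by
      rw [ht, Real.log_exp]; ring
    rw [this]
    rw [he] at key
    linarith

theorem stmt_6 {n : ℕ} (x : Fin n → ℝ)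
    (hx : ∀ k, 0 ≤ x k) (hsum : ∑ k, x k = 1) (j : Fin n) :
    x j / ∏ k, (1 - x k) ^ (1 - x k) ≤ Real.exp (1 / Real.exp 1) := by
  have hxle : ∀ k, x k ≤ 1 := by
    intro k
    calc x k ≤ ∑ i, x i := Finset.single_le_sum (fun i _ => hx i) (Finset.mem_univ k)
      _ = 1 := hsum
  have hfpos : ∀ k, 0 < (1 - x k) ^ (1 - x k) := by
    intro k
    rcases eq_or_lt_of_le (hxle k) with h | h
    · have : 1 - x k = 0 := by linarith
      rw [this, Real.rpow_zero]; norm_num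
    · exact Real.rpow_pos_of_pos (by linarith) _
  have hP : 0 < ∏ k, (1 - x k) ^ (1 - x k) :=
    Finset.prod_pos (fun k _ => hfpos k)
  rw [div_le_iff₀ hP]
  -- split off j-th factor
  have hsplit : ∏ k, (1 - x k) ^ (1 - x k)
      = (1 - x j) ^ (1 - x j) * ∏ k ∈ Finset.univ.erase j, (1 - x k) ^ (1 - x k) :=
    (Finset.mul_prod_erase Finset.univ _ (Finset.mem_univ j)).symm
  have hsumerase : ∑ k ∈ Finset.univ.erase j, x k = 1 - x j := by
    have := Finset.add_sum_erase Finset.univ x (Finset.mem_univ j)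
    rw [hsum] at this
    linarith
  have hprod : Real.exp (x j - 1) ≤ ∏ k ∈ Finset.univ.erase j, (1 - x k) ^ (1 - x k) := by
    have : Real.exp (x j - 1) = ∏ k ∈ Finset.univ.erase j, Real.exp (-x k) := by
      rw [← Real.exp_sum]
      congr 1
      rw [Finset.sum_neg_distrib, hsumerase]
      ring
    rw [this]
    exact Finset.prod_le_prod (fun k _ => (Real.exp_pos _).le)
      (fun k _ => aux_exp_neg_le (hx k) (hxle k))
  have hjj : Real.exp (-(1 / Real.exp 1)) ≤ (1 - x j) ^ (1 - x j) :=
    aux_tt_ge (by linarith [hxle j]) (by linarith [hx j])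
  have hxj : x j ≤ Real.exp (x j - 1) := by
    have := Real.add_one_le_exp (x j - 1)
    linarith
  calc x j ≤ Real.exp (x j - 1) := hxj
    _ = Real.exp (1 / Real.exp 1) * (Real.exp (-(1 / Real.exp 1)) * Real.exp (x j - 1)) := by
        rw [← Real.exp_add, ← Real.exp_add]; ring_nf
    _ ≤ Real.exp (1 / Real.exp 1) * ((1 - x j) ^ (1 - x j) * ∏ k ∈ Finset.univ.erase j, (1 - x k) ^ (1 - x k)) := by
        apply mul_le_mul_of_nonneg_left _ (Real.exp_pos _).le
        exact mul_le_mul hjj hprod (Real.exp_pos _).le (hfpos j).le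
    _ = Real.exp (1 / Real.exp 1) * ∏ k, (1 - x k) ^ (1 - x k) := by rw [← hsplit]
end

section
/- Let g : ℝ≥0 → ℝ≥0 satisfy g(x) ≥ e^{x/e} for 0 ≤ x ≤ e and g(x) ≥ x for x > e. Then for any r_1,...,r_n ≥ 0, ∏_{k=1}^n g(r_k) ≥ ∑_{k=1}^n r_k. -/
open scoped BigOperators

/-- Product of numbers each exceeding e dominates their sum and is at least e
(for nonempty sets). -/
lemma aux_prod_ge_sum {α : Type*} [DecidableEq α] (s : Finset α) (f : α → ℝ)
    (hf : ∀ k ∈ s, Real.exp 1 < f k) (hne : s.Nonempty) :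
    (∑ k ∈ s, f k) ≤ ∏ k ∈ s, f k ∧ Real.exp 1 ≤ ∏ k ∈ s, f k := by
  induction s using Finset.induction_on with
  | empty => exact absurd hne (by simp)
  | @insert a s hx ih =>
    rw [Finset.prod_insert hx, Finset.sum_insert hx]
    have ha : Real.exp 1 < f a := hf a (Finset.mem_insert_self a s)
    have he : (2:ℝ) < Real.exp 1 := by
      have := Real.exp_one_gt_d9; linarith
    rcases s.eq_empty_or_nonempty with h | h
    · subst h; simp; nlinarith
    · obtain ⟨h1, h2⟩ := ih (fun k hk => hf k (Finset.mem_insert_of_mem hk)) h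
      constructor
      · nlinarith
      · nlinarith

theorem stmt_7 (g : ℝ → ℝ) (hg0 : ∀ x, 0 ≤ x → 0 ≤ g x)
    (h1 : ∀ x, 0 ≤ x → x ≤ Real.exp 1 → g x ≥ Real.exp (x / Real.exp 1))
    (h2 : ∀ x, Real.exp 1 < x → g x ≥ x)
    {n : ℕ} (r : Fin n → ℝ) (hr : ∀ k, 0 ≤ r k) :
    ∏ k, g (r k) ≥ ∑ k, r k := by
  classical
  set e := Real.exp 1 with he
  have hepos : (0:ℝ) < e := Real.exp_pos 1
  set A : Finset (Fin n) := Finset.univ.filter (fun k => r k ≤ e) with hA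
  set B : Finset (Fin n) := Finset.univ.filter (fun k => ¬ r k ≤ e) with hB
  have hsplitP : (∏ k ∈ A, g (r k)) * (∏ k ∈ B, g (r k)) = ∏ k, g (r k) :=
    Finset.prod_filter_mul_prod_filter_not _ _ _
  have hsplitS : (∑ k ∈ A, r k) + (∑ k ∈ B, r k) = ∑ k, r k :=
    Finset.sum_filter_add_sum_filter_not _ _ _
  set SA := ∑ k ∈ A, r k with hSA
  set SB := ∑ k ∈ B, r k with hSB
  have hSA0 : 0 ≤ SA := Finset.sum_nonneg fun k _ => hr k
  -- product over A bounds
  have hPA : Real.exp (SA / e) ≤ ∏ k ∈ A, g (r k) := by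
    have : Real.exp (SA / e) = ∏ k ∈ A, Real.exp (r k / e) := by
      rw [← Real.exp_sum]
      congr 1
      rw [hSA, Finset.sum_div]
    rw [this]
    refine Finset.prod_le_prod (fun k _ => (Real.exp_pos _).le) ?_
    intro k hk
    exact h1 (r k) (hr k) (by simpa [hA] using (Finset.mem_filter.mp hk).2)
  have hPA0 : 0 < ∏ k ∈ A, g (r k) := lt_of_lt_of_le (Real.exp_pos _) hPA
  -- product over B
  have hBgt : ∀ k ∈ B, e < r k := by
    intro k hk
    have := (Finset.mem_filter.mp hk).2
    exact lt_of_not_ge this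
  have hPBr : ∏ k ∈ B, r k ≤ ∏ k ∈ B, g (r k) := by
    refine Finset.prod_le_prod (fun k hk => le_of_lt (lt_trans hepos (hBgt k hk))) ?_
    exact fun k hk => h2 (r k) (hBgt k hk)
  rcases B.eq_empty_or_nonempty with hBe | hBne
  · -- B empty
    have hSB0 : SB = 0 := by simp [hSB, hBe]
    have hPB1 : ∏ k ∈ B, g (r k) = 1 := by simp [hBe]
    have key : SA ≤ Real.exp (SA / e) := by
      have h := Real.add_one_le_exp (SA / e - 1)
      have : Real.exp (SA / e) = e * Real.exp (SA / e - 1) := by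
        rw [← Real.exp_add]; ring_nf
      have h2' : SA ≤ Real.exp (SA / e - 1) * e := by
        rw [← div_le_iff₀ hepos]; linarith
      rw [this]; linarith
    calc ∑ k, r k = SA := by rw [← hsplitS, hSB0]; ring
      _ ≤ Real.exp (SA / e) := key
      _ ≤ ∏ k ∈ A, g (r k) := hPA
      _ = ∏ k, g (r k) := by rw [← hsplitP, hPB1, mul_one]
  · -- B nonempty
    obtain ⟨hrsum, hre⟩ := aux_prod_ge_sum B r hBgt hBne
    have hPB : SB ≤ ∏ k ∈ B, g (r k) := le_trans hrsum hPBr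
    have hPBe : e ≤ ∏ k ∈ B, g (r k) := le_trans hre hPBr
    have hexp : 1 + SA / e ≤ Real.exp (SA / e) := by
      have := Real.add_one_le_exp (SA / e); linarith
    rw [← hsplitP, ← hsplitS]
    have h3 : Real.exp (SA / e) * (∏ k ∈ B, g (r k)) ≤
        (∏ k ∈ A, g (r k)) * (∏ k ∈ B, g (r k)) := by
      apply mul_le_mul_of_nonneg_right hPA (le_trans hepos.le hPBe)
    have h4 : SA + SB ≤ Real.exp (SA / e) * (∏ k ∈ B, g (r k)) := by
      have hdiv : SA / e * (∏ k ∈ B, g (r k)) ≥ SA := by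
        rw [div_mul_eq_mul_div, ge_iff_le, le_div_iff₀ hepos]
        nlinarith
      nlinarith [Real.exp_pos (SA / e)]
    linarith
end

section
/- Let a ∈ (1, e^{1/2}) and write b = ln a. The function ψ(x) = 1 - (1-x)·a^x is increasing and strictly convex on [0,1], maps [0,1] onto [0,1], and the function x · ψ'(x)/ψ(x) is strictly increasing on (0,1). -/
open Real Set

theorem stmt_9 (a : ℝ) (ha1 : 1 < a) (ha2 : a < Real.exp (1/2))
    (ψ ψ' : ℝ → ℝ)
    (hψ : ∀ x, ψ x = 1 - (1 - x) * a ^ x)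
    (hψ' : ∀ x, ψ' x = (1 - (1 - x) * Real.log a) * a ^ x) :
    StrictMonoOn ψ (Set.Icc 0 1) ∧
    StrictConvexOn ℝ (Set.Icc 0 1) ψ ∧
    ψ '' Set.Icc 0 1 = Set.Icc 0 1 ∧
    StrictMonoOn (fun x => x * ψ' x / ψ x) (Set.Ioo 0 1) := by
  have ha0 : (0:ℝ) < a := lt_trans one_pos ha1
  set b := Real.log a with hbdef
  have hb0 : 0 < b := Real.log_pos ha1
  have hb2 : b < 1/2 := by
    have := Real.log_lt_log ha0 ha2
    rwa [Real.log_exp] at this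
  have hpowpos : ∀ x : ℝ, 0 < a ^ x := fun x => Real.rpow_pos_of_pos ha0 x
  have hpow : ∀ x : ℝ, HasDerivAt (fun x => a ^ x) (a ^ x * b) x :=
    fun x => (Real.hasStrictDerivAt_const_rpow ha0 x).hasDerivAt
  have hψfun : ψ = fun x => 1 - (1 - x) * a ^ x := funext hψ
  have hψ'fun : ψ' = fun x => (1 - (1 - x) * b) * a ^ x := funext hψ'
  set ψ'' : ℝ → ℝ := fun x => b * (2 - (1 - x) * b) * a ^ x with hψ''def
  have hd1 : ∀ x : ℝ, HasDerivAt ψ (ψ' x) x := by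
    intro x
    rw [hψfun]
    have h := (hasDerivAt_const x (1:ℝ)).sub
      ((((hasDerivAt_const x (1:ℝ)).sub (hasDerivAt_id x)).mul (hpow x)))
    refine h.congr_deriv ?_
    rw [hψ']
    simp only [id_eq, Pi.sub_apply, Pi.mul_apply]
    ring
  have hd2 : ∀ x : ℝ, HasDerivAt ψ' (ψ'' x) x := by
    intro x
    rw [hψ'fun]
    have h := (((hasDerivAt_const x (1:ℝ)).sub
      (((hasDerivAt_const x (1:ℝ)).sub (hasDerivAt_id x)).mul (hasDerivAt_const x b))).mul (hpow x))
    refine h.congr_deriv ?_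
    simp only [hψ''def, id_eq, Pi.sub_apply, Pi.mul_apply]
    ring
  have hψcont : Continuous ψ := continuous_iff_continuousAt.2 fun x => (hd1 x).continuousAt
  have hderivψ : deriv ψ = ψ' := funext fun x => (hd1 x).deriv
  have hψ'pos : ∀ x ∈ Icc (0:ℝ) 1, 0 < ψ' x := by
    intro x hx
    rw [hψ']
    have h1 : (1 - x) * b < 1 := by nlinarith [hx.1, hx.2]
    have := hpowpos x
    nlinarith
  have mono1 : StrictMonoOn ψ (Icc (0:ℝ) 1) := by
    apply strictMonoOn_of_deriv_pos (convex_Icc 0 1) hψcont.continuousOn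
    intro x hx
    rw [interior_Icc] at hx
    rw [hderivψ]
    exact hψ'pos x ⟨le_of_lt hx.1, le_of_lt hx.2⟩
  have conv1 : StrictConvexOn ℝ (Icc (0:ℝ) 1) ψ := by
    apply strictConvexOn_of_deriv2_pos (convex_Icc 0 1) hψcont.continuousOn
    intro x hx
    rw [interior_Icc] at hx
    have : deriv^[2] ψ x = ψ'' x := by
      simp only [Function.iterate_succ, Function.iterate_zero, Function.comp_apply, id_eq,
        hderivψ]
      exact (hd2 x).deriv
    rw [this, hψ''def]
    have := hpowpos x
    have h2 : 0 < 2 - (1 - x) * b := by nlinarith [hx.1, hx.2]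
    positivity
  have hψ0 : ψ 0 = 0 := by rw [hψ]; simp
  have hψ1 : ψ 1 = 1 := by rw [hψ]; simp
  have himg : ψ '' Icc (0:ℝ) 1 = Icc (0:ℝ) 1 := by
    apply Subset.antisymm
    · rintro y ⟨x, hx, rfl⟩
      constructor
      · rw [← hψ0]
        exact mono1.monotoneOn (left_mem_Icc.2 zero_le_one) hx hx.1
      · rw [← hψ1]
        exact mono1.monotoneOn hx (right_mem_Icc.2 zero_le_one) hx.2
    · intro y hy
      have := intermediate_value_Icc (zero_le_one) hψcont.continuousOn
      rw [hψ0, hψ1] at this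
      exact this hy
  refine ⟨mono1, conv1, himg, ?_⟩
  have hψpos : ∀ x ∈ Ioo (0:ℝ) 1, 0 < ψ x := by
    intro x hx
    have := mono1 (left_mem_Icc.2 zero_le_one) ⟨le_of_lt hx.1, le_of_lt hx.2⟩ hx.1
    rwa [hψ0] at this
  have hg : ∀ x ∈ Ioo (0:ℝ) 1, HasDerivAt (fun x => x * ψ' x / ψ x)
      (((1 * ψ' x + x * ψ'' x) * ψ x - x * ψ' x * ψ' x) / (ψ x) ^ 2) x := by
    intro x hx
    exact ((hasDerivAt_id x).mul (hd2 x)).div (hd1 x) (ne_of_gt (hψpos x hx))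
  apply strictMonoOn_of_deriv_pos (convex_Ioo 0 1)
  · intro x hx
    exact (hg x hx).continuousAt.continuousWithinAt
  · intro x hx
    rw [interior_Ioo] at hx
    rw [(hg x hx).deriv]
    apply div_pos
    · -- the key inequality
      obtain ⟨hx0, hx1⟩ := hx
      set u : ℝ := a ^ x with hu
      have hu0 : 0 < u := hpowpos x
      have huexp : u = Real.exp (b * x) := by
        rw [hu, Real.rpow_def_of_pos ha0]
      have hbx : 0 < b * x := mul_pos hb0 hx0
      have hub : (1 - b * x) * u < 1 := by
        have h1 : 1 - b * x < Real.exp (-(b * x)) := by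
          have := Real.add_one_lt_exp (x := -(b * x)) (by nlinarith)
          linarith
        calc (1 - b * x) * u < Real.exp (-(b * x)) * Real.exp (b * x) := by
              rw [huexp]; exact mul_lt_mul_of_pos_right h1 (Real.exp_pos _)
          _ = 1 := by rw [← Real.exp_add]; simp
      set A : ℝ := 1 - (1 - x) * b + x * b * (2 - (1 - x) * b) with hA
      set B : ℝ := (1 - x) * A + x * (1 - (1 - x) * b) ^ 2 with hB
      have hApos : 0 < A := by rw [hA]; nlinarith
      have hBpos : 0 < B := by
        rw [hB]
        have : 0 < 1 - (1 - x) * b := by nlinarith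
        nlinarith
      have hkey : B < A * (1 - b * x) := by
        have hid : A * (1 - b * x) - B = b * x ^ 2 * (1 - 2 * b) + b ^ 3 * x ^ 2 * (1 - x) := by
          rw [hA, hB]; ring
        nlinarith [mul_pos (mul_pos hb0 (mul_pos hx0 hx0)) (by linarith : (0:ℝ) < 1 - 2 * b),
          mul_pos (mul_pos (mul_pos (mul_pos hb0 hb0) hb0) (mul_pos hx0 hx0))
            (by linarith : (0:ℝ) < 1 - x)]
      have h1bx : 0 < 1 - b * x := by nlinarith
      have hAB : u * B < A := by
        have h2 : (1 - b * x) * u * B < 1 * B := by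
          exact mul_lt_mul_of_pos_right hub hBpos
        have h3 : (1 - b * x) * (u * B) < (1 - b * x) * A := by nlinarith
        exact lt_of_mul_lt_mul_left h3 (le_of_lt h1bx)
      have hN : (1 * ψ' x + x * ψ'' x) * ψ x - x * ψ' x * ψ' x = u * (A - u * B) := by
        rw [hψ, hψ', hψ''def, hA, hB, hu]
        ring
      rw [hN]
      exact mul_pos hu0 (by linarith)
    · exact pow_pos (hψpos x hx) 2
end

section
/- Let a ∈ (1, e^{1/2}) and ψ(x) = 1 - (1-x)·a^x. The function x · ψ''(x)/ψ'(x) is strictly increasing on (0,1). -/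
theorem stmt_10 (a : ℝ) (ha1 : 1 < a) (ha2 : a < Real.exp (1/2))
    (ψ' ψ'' : ℝ → ℝ)
    (hψ' : ∀ x, ψ' x = (1 - (1 - x) * Real.log a) * a ^ x)
    (hψ'' : ∀ x, ψ'' x = Real.log a * (2 - (1 - x) * Real.log a) * a ^ x) :
    StrictMonoOn (fun x => x * ψ'' x / ψ' x) (Set.Ioo 0 1) := by
  set L := Real.log a with hL
  have hapos : (0 : ℝ) < a := lt_trans one_pos ha1
  have hL0 : 0 < L := Real.log_pos ha1
  have hL2 : L < 1/2 := by
    have h : Real.exp L < Real.exp (1/2) := by rw [hL, Real.exp_log hapos]; exact ha2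
    exact Real.exp_lt_exp.mp h
  intro x hx y hy hxy
  obtain ⟨hx0, hx1⟩ := hx
  obtain ⟨hy0, hy1⟩ := hy
  have hPx : (0 : ℝ) < a ^ x := Real.rpow_pos_of_pos hapos x
  have hPy : (0 : ℝ) < a ^ y := Real.rpow_pos_of_pos hapos y
  have hdx : 0 < 1 - (1 - x) * L := by nlinarith
  have hdy : 0 < 1 - (1 - y) * L := by nlinarith
  simp only [hψ', hψ'']
  rw [div_lt_div_iff₀ (by positivity) (by positivity)]
  have hc : 0 < 1 - L := by linarith
  have hbr : 0 < L^2*x*y + L*(1-L)*(x+y) + (1-L)*(2-L) := by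
    have h1 : 0 < L^2*x*y := by positivity
    have h2 : 0 < L*(1-L)*(x+y) := by positivity
    have h3 : 0 < (1-L)*(2-L) := by nlinarith
    linarith
  have key : x * (L * (2 - (1 - x) * L)) * (1 - (1 - y) * L)
      < y * (L * (2 - (1 - y) * L)) * (1 - (1 - x) * L) := by
    nlinarith [mul_pos (mul_pos hL0 (sub_pos.mpr hxy)) hbr]
  have h2 := mul_lt_mul_of_pos_right key (mul_pos hPx hPy)
  linear_combination h2
end

section
/- Let a be the unique root in (1, e) of (1 - ln a)/a = 1/e, and ψ(x) = 1 - (1-x)·a^x. Then ψ(e^{-r/e}) + ψ(r·e^{-r/e}) ≥ 1 for all 0 ≤ r ≤ 1. -/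
open Real Finset

-- exp lower Taylor bound (degree 3, with 4th order error), for x ∈ [-1,1]
lemma exp_lb4 (t : ℝ) (h0 : 0 ≤ t) (h1 : t ≤ 1) :
    1 - t + t^2/2 - t^3/6 - 5*t^4/96 ≤ Real.exp (-t) := by
  have habs : |(-t)| ≤ 1 := by rw [abs_neg, abs_of_nonneg h0]; exact h1
  have h := Real.exp_bound habs (n := 4) (by norm_num)
  have hsum : ∑ m ∈ Finset.range 4, (-t) ^ m / (m.factorial : ℝ)
      = 1 - t + t^2/2 - t^3/6 := by
    simp [Finset.sum_range_succ, Nat.factorial]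
    try ring
  rw [hsum] at h
  have habs' : |(-t)| = t := by rw [abs_neg, abs_of_nonneg h0]
  rw [habs'] at h
  have := abs_le.mp h
  have h2 : t ^ 4 * ((4:ℕ).succ / ((4:ℕ).factorial * (4:ℕ) : ℝ)) = 5*t^4/96 := by
    norm_num [Nat.factorial]
    try ring
  nlinarith [this.1]

-- exp upper Taylor bound (degree 2, with cubic error), for z ∈ [0,1]
lemma exp_ub3 (z : ℝ) (h0 : 0 ≤ z) (h1 : z ≤ 1) :
    Real.exp z ≤ 1 + z + z^2/2 + (2/9)*z^3 := by
  have habs : |z| ≤ 1 := by rw [abs_of_nonneg h0]; exact h1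
  have h := Real.exp_bound habs (n := 3) (by norm_num)
  have hsum : ∑ m ∈ Finset.range 3, z ^ m / (m.factorial : ℝ) = 1 + z + z^2/2 := by
    simp [Finset.sum_range_succ, Nat.factorial]
    try ring
  rw [hsum, abs_of_nonneg h0] at h
  have := abs_le.mp h
  have h2 : z ^ 3 * ((3:ℕ).succ / ((3:ℕ).factorial * (3:ℕ) : ℝ)) = 2*z^3/9 := by
    norm_num [Nat.factorial]
    try ring
  nlinarith [this.2]

-- (1+t) e^{-t} ≥ 1 - t²/2 for t ∈ [0,1]
lemma key_t (t : ℝ) (h0 : 0 ≤ t) (h1 : t ≤ 1) :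
    1 - t^2/2 ≤ (1 + t) * Real.exp (-t) := by
  have h := exp_lb4 t h0 h1
  nlinarith [h, pow_nonneg h0 3, pow_nonneg h0 4, pow_nonneg h0 5]
set_option maxHeartbeats 1000000 in
theorem stmt_11 (a : ℝ) (ha1 : 1 < a) (ha2 : a < Real.exp 1)
    (ha : (1 - Real.log a) / a = 1 / Real.exp 1)
    (ψ : ℝ → ℝ) (hψ : ∀ x, ψ x = 1 - (1 - x) * a ^ x) :
    ∀ r ∈ Set.Icc (0:ℝ) 1,
      ψ (Real.exp (-r / Real.exp 1)) + ψ (r * Real.exp (-r / Real.exp 1)) ≥ 1 := by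
  intro r hr
  obtain ⟨hr0, hr1⟩ := hr
  set E : ℝ := Real.exp 1 with hE
  have hE0 : (0:ℝ) < E := Real.exp_pos 1
  have hE2 : (2:ℝ) ≤ E := by
    have := Real.add_one_le_exp (1:ℝ); linarith
  have ha0 : (0:ℝ) < a := by linarith
  set L : ℝ := Real.log a with hLdef
  have hL0 : 0 < L := Real.log_pos ha1
  have hL1 : L < 1 := by
    have h := Real.log_lt_log ha0 ha2
    rwa [Real.log_exp] at h
  -- a = E * (1 - L)
  have hkey : a = E * (1 - L) := by
    field_simp at ha
    linarith [ha]
  have hL1' : 0 < 1 - L := by linarith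
  -- identity exp(1-L) * (1-L) = 1
  have hid : Real.exp (1 - L) * (1 - L) = 1 := by
    have h1 : Real.exp (1 - L) * Real.exp L = E := by
      rw [← Real.exp_add]; norm_num; exact hE.symm
    have h2 : Real.exp L = a := Real.exp_log ha0
    rw [h2, hkey] at h1
    have h3 : E * (Real.exp (1 - L) * (1 - L)) = E * 1 := by ring_nf; ring_nf at h1; linarith
    exact mul_left_cancel₀ (ne_of_gt hE0) h3
  -- lower bound L ≥ 2/5
  have hL04 : (2:ℝ)/5 ≤ L := by
    have hcube : (1 + (1-L)/3)^3 ≤ Real.exp (1 - L) := by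
      have h1 : 1 + (1-L)/3 ≤ Real.exp ((1-L)/3) := by
        have := Real.add_one_le_exp ((1-L)/3); linarith
      have h2 : (0:ℝ) < 1 + (1-L)/3 := by linarith
      calc (1 + (1-L)/3)^3 ≤ (Real.exp ((1-L)/3))^3 :=
            pow_le_pow_left₀ (le_of_lt h2) h1 3
        _ = Real.exp (1 - L) := by
            rw [← Real.exp_nat_mul]; ring_nf
    have h3 : (1 + (1-L)/3)^3 * (1-L) ≤ 1 := by
      calc (1 + (1-L)/3)^3 * (1-L) ≤ Real.exp (1-L) * (1-L) :=
            mul_le_mul_of_nonneg_right hcube (le_of_lt hL1')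
        _ = 1 := hid
    by_contra hcon
    push_neg at hcon
    have hcon' : (0:ℝ) ≤ 2/5 - L := by linarith
    nlinarith [h3, mul_nonneg hcon' hcon', mul_nonneg (mul_nonneg hcon' hcon') hcon',
      mul_nonneg hcon' hL0.le, mul_nonneg (mul_nonneg hcon' hcon') hL0.le,
      mul_nonneg hcon' hL1'.le]
  -- abbreviations
  set x : ℝ := Real.exp (-r / E) with hxdef
  have hx0 : 0 < x := Real.exp_pos _
  have hx1 : x ≤ 1 := by
    apply Real.exp_le_one_iff.mpr
    apply div_nonpos_of_nonpos_of_nonneg <;> linarith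
  set y : ℝ := r * x with hydef
  have hy0 : 0 ≤ y := mul_nonneg hr0 (le_of_lt hx0)
  have hy1 : y ≤ 1 := by
    calc y ≤ 1 * 1 := mul_le_mul hr1 hx1 (le_of_lt hx0) zero_le_one
      _ = 1 := by norm_num
  have hrpow : ∀ u : ℝ, a ^ u = Real.exp (L * u) := by
    intro u; rw [Real.rpow_def_of_pos ha0]
  -- Claim 1 : ψ x ≥ 1 + a * (x - 1)
  have hC1 : 1 + a * (x - 1) ≤ ψ x := by
    rw [hψ, hrpow]
    have h1 : Real.exp (L * x) ≤ a := by
      rw [← Real.exp_log ha0]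
      apply Real.exp_le_exp.mpr
      nlinarith
    nlinarith [h1, hx1]
  -- Claim 2 : ψ y ≥ (1-L) y + (L(2-L)/2) y²
  have hC2 : (1 - L) * y + (L * (2 - L) / 2) * y^2 ≤ ψ y := by
    rw [hψ, hrpow]
    have hz0 : 0 ≤ L * y := mul_nonneg (le_of_lt hL0) hy0
    have hz1 : L * y ≤ 1 := by nlinarith
    have h1 : Real.exp (L * y) ≤ 1 + L*y + (L*y)^2/2 + (2/9)*(L*y)^3 :=
      exp_ub3 (L*y) hz0 hz1
    have h2 : (0:ℝ) ≤ 1 - y := by linarith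
    nlinarith [mul_le_mul_of_nonneg_left h1 h2, pow_nonneg hy0 3, pow_nonneg hy0 4,
      mul_nonneg (mul_nonneg (le_of_lt hL0) (le_of_lt hL0)) (pow_nonneg hy0 3)]
  -- key estimate : (E + r) * x ≥ E - r²/(2E)
  have ht0 : 0 ≤ r / E := div_nonneg hr0 (le_of_lt hE0)
  have ht1 : r / E ≤ 1 := by
    rw [div_le_one hE0]; linarith
  have hkt := key_t (r/E) ht0 ht1
  have hxt : x = Real.exp (-(r/E)) := by rw [hxdef, neg_div]
  have hA : E - r^2/(2*E) ≤ (E + r) * x := by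
    have h2 : (1 - (r/E)^2/2) * E ≤ (1 + r/E) * Real.exp (-(r/E)) * E :=
      mul_le_mul_of_nonneg_right hkt (le_of_lt hE0)
    have h3 : (1 - (r/E)^2/2) * E = E - r^2/(2*E) := by
      field_simp
    have h4 : (1 + r/E) * Real.exp (-(r/E)) * E = (E + r) * x := by
      rw [hxt]; field_simp; try ring
    linarith
  -- key estimate : E * x² ≥ 1
  have hB : 1 ≤ E * x^2 := by
    have hsq : x^2 = Real.exp (-(r/E) + -(r/E)) := by
      rw [Real.exp_add, hxt]; ring
    have hEx : E * x^2 = Real.exp (1 + (-(r/E) + -(r/E))) := by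
      rw [hsq, hE, ← Real.exp_add]
    rw [hEx]
    apply Real.one_le_exp
    have h5 : r/E ≤ 1/2 := by
      rw [div_le_iff₀ hE0]; linarith
    linarith
  -- combine
  have hC : 1 - L ≤ L * (2 - L) := by nlinarith [hL04, hL1, sq_nonneg (L - 2/5)]
  have hmain : 0 ≤ (1 - L) * ((E + r) * x - E) + (L*(2-L)/2) * y^2 := by
    have h1 : -((1 - L) * (r^2/(2*E))) ≤ (1 - L) * ((E + r) * x - E) := by
      have := mul_le_mul_of_nonneg_left hA (le_of_lt hL1')
      nlinarith
    have h2 : (1 - L) * (r^2/(2*E)) ≤ (L*(2-L)/2) * y^2 := by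
      have hy2 : y^2 = r^2 * x^2 := by rw [hydef]; ring
      have h3 : (1-L)*r^2 ≤ L*(2-L)*(E*x^2)*r^2 := by
        have h4 : (1-L)*r^2 ≤ (L*(2-L))*r^2 :=
          mul_le_mul_of_nonneg_right hC (sq_nonneg r)
        nlinarith [hB, sq_nonneg r,
          mul_nonneg (mul_nonneg hL0.le (by linarith : (0:ℝ) ≤ 2 - L)) (sq_nonneg r)]
      have h5 : (1 - L) * (r^2/(2*E)) = ((1-L)*r^2)/(2*E) := by ring
      have h7 : (L*(2-L)*(E*x^2)*r^2)/(2*E) = (L*(2-L)/2) * (r^2*x^2) := by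
        field_simp
      rw [hy2]
      calc (1 - L) * (r^2/(2*E)) = ((1-L)*r^2)/(2*E) := h5
        _ ≤ (L*(2-L)*(E*x^2)*r^2)/(2*E) := (div_le_div_iff_of_pos_right (by positivity)).mpr h3
        _ = (L*(2-L)/2) * (r^2*x^2) := h7
    linarith
  have expand : 1 + a * (x - 1) + ((1 - L) * y + (L * (2 - L) / 2) * y^2)
      = 1 + ((1 - L) * ((E + r) * x - E) + (L*(2-L)/2) * y^2) := by
    rw [hkey, hydef]; ring
  have hsum := add_le_add hC1 hC2
  rw [ge_iff_le]
  linarith [hsum, hmain, expand.ge, expand.le]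
end

section
/- Let ψ : [0,1] → [0,1] be an increasing, differentiable, convex function with ψ(0)=0, ψ(1)=1. If ψ(e^{-r/e}) + ψ(r·e^{-r/e}) ≥ 1 for all r ∈ [0,1], then the same inequality holds for all r ∈ [0,e]. -/
open Real

/-- Chord bound for log on `[1, e]`. -/
lemma log_chord_aux {r : ℝ} (h1 : 1 ≤ r) (h2 : r ≤ Real.exp 1) :
    (r - 1) / (Real.exp 1 - 1) ≤ Real.log r := by
  have he : (1:ℝ) < Real.exp 1 := by
    have := Real.exp_one_gt_d9; linarith
  have hd : (0:ℝ) < Real.exp 1 - 1 := by linarith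
  have ha : (0:ℝ) ≤ (Real.exp 1 - r) / (Real.exp 1 - 1) := by
    apply div_nonneg <;> linarith
  have hb : (0:ℝ) ≤ (r - 1) / (Real.exp 1 - 1) := by
    apply div_nonneg <;> linarith
  have hab : (Real.exp 1 - r) / (Real.exp 1 - 1) + (r - 1) / (Real.exp 1 - 1) = 1 := by
    field_simp
    ring
  have key := strictConcaveOn_log_Ioi.concaveOn.2 (x := 1) (y := Real.exp 1)
    (by norm_num : (1:ℝ) ∈ Set.Ioi (0:ℝ)) (Set.mem_Ioi.2 (by positivity)) ha hb hab
  have hx : ((Real.exp 1 - r) / (Real.exp 1 - 1)) • (1:ℝ)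
      + ((r - 1) / (Real.exp 1 - 1)) • Real.exp 1 = r := by
    have h9 : (Real.exp 1 - r) / (Real.exp 1 - 1) * 1 + (r - 1) / (Real.exp 1 - 1) * Real.exp 1
        = r * (Real.exp 1 - 1) / (Real.exp 1 - 1) := by ring
    rw [smul_eq_mul, smul_eq_mul, h9, mul_div_cancel_right₀ _ (ne_of_gt hd)]
  rw [hx] at key
  simpa [Real.log_exp, smul_eq_mul] using key

theorem stmt_12 (ψ : ℝ → ℝ)
    (hmono : MonotoneOn ψ (Set.Icc 0 1))
    (hdiff : DifferentiableOn ℝ ψ (Set.Icc 0 1))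
    (hconv : ConvexOn ℝ (Set.Icc 0 1) ψ)
    (h0 : ψ 0 = 0) (h1 : ψ 1 = 1)
    (hmaps : Set.MapsTo ψ (Set.Icc 0 1) (Set.Icc 0 1))
    (hbase : ∀ r ∈ Set.Icc (0:ℝ) 1,
      ψ (Real.exp (-r / Real.exp 1)) + ψ (r * Real.exp (-r / Real.exp 1)) ≥ 1) :
    ∀ r ∈ Set.Icc (0:ℝ) (Real.exp 1),
      ψ (Real.exp (-r / Real.exp 1)) + ψ (r * Real.exp (-r / Real.exp 1)) ≥ 1 := by
  intro r hr
  obtain ⟨hr0, hre⟩ := hr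
  rcases le_or_gt r 1 with hr1 | hr1
  · exact hbase r ⟨hr0, hr1⟩
  -- now 1 < r ≤ e
  have he : (0:ℝ) < Real.exp 1 := Real.exp_pos 1
  have he1 : (1:ℝ) < Real.exp 1 := by have := Real.exp_one_gt_d9; linarith
  have hrpos : (0:ℝ) < r := by linarith
  have hlogpos : 0 ≤ Real.log r := Real.log_nonneg hr1.le
  have hlog1 : Real.log r ≤ r / Real.exp 1 := by
    have := Real.log_le_sub_one_of_pos (show (0:ℝ) < r / Real.exp 1 by positivity)
    rw [Real.log_div (ne_of_gt hrpos) (ne_of_gt he), Real.log_exp] at this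
    linarith
  have hlog2 : r - 1 ≤ r * Real.log r := by
    have := Real.log_le_sub_one_of_pos (show (0:ℝ) < 1/r by positivity)
    rw [Real.log_div one_ne_zero (ne_of_gt hrpos), Real.log_one] at this
    -- this : 0 - log r ≤ 1/r - 1, i.e. 1 - 1/r ≤ log r
    have h2 : 1 - 1/r ≤ Real.log r := by linarith
    have h3 := mul_le_mul_of_nonneg_left h2 hrpos.le
    have h4 : r * (1 - 1/r) = r - 1 := by field_simp
    linarith
  set r' : ℝ := r - Real.exp 1 * Real.log r with hr'def
  have hr'0 : 0 ≤ r' := by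
    have h5 : Real.exp 1 * Real.log r ≤ Real.exp 1 * (r / Real.exp 1) :=
      mul_le_mul_of_nonneg_left hlog1 he.le
    have h6 : Real.exp 1 * (r / Real.exp 1) = r := by field_simp
    simp only [hr'def]; linarith
  have hr'1 : r' ≤ 1 := by
    -- e * r * log r ≥ e * (r-1) ≥ r * (r - 1), so r' * r ≤ r ... simpler:
    -- e * log r ≥ e (r-1)/r ≥ r - 1 since e ≥ r
    have h5 := mul_le_mul_of_nonneg_left hlog2 he.le
    -- e(r-1) ≤ e * (r * log r)
    simp only [hr'def]
    nlinarith
  -- exp(-r'/e) = r * exp(-r/e)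
  have hF3 : Real.exp (-r' / Real.exp 1) = r * Real.exp (-r / Real.exp 1) := by
    have h7 : -r' / Real.exp 1 = Real.log r + (-r / Real.exp 1) := by
      field_simp [hr'def]
      ring
    rw [h7, Real.exp_add, Real.exp_log hrpos]
  -- key inequality: r * r' ≤ 1, i.e. r^2 - e * r * log r ≤ 1
  have hkey : r * r' ≤ 1 := by
    simp only [hr'def]
    rcases le_or_gt r (Real.exp 1 - 1) with hc | hc
    · -- r ≤ e - 1 : use r log r ≥ r - 1
      have h5 := mul_le_mul_of_nonneg_left hlog2 he.le
      nlinarith [mul_nonneg (sub_nonneg.2 hr1.le) (sub_nonneg.2 (by linarith : r + 1 ≤ Real.exp 1))]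
    · -- e - 1 ≤ r : use chord bound
      have hd : (0:ℝ) < Real.exp 1 - 1 := by linarith
      have hch := log_chord_aux hr1.le hre
      rw [div_le_iff₀ hd] at hch
      -- hch : r - 1 ≤ log r * (e - 1)
      nlinarith [mul_le_mul_of_nonneg_left hch (by positivity : (0:ℝ) ≤ Real.exp 1 * r),
        mul_nonneg (sub_nonneg.2 hr1.le) (sub_nonneg.2 hc.le)]
  -- memberships
  have hx1 : Real.exp (-r / Real.exp 1) ∈ Set.Icc (0:ℝ) 1 := by
    constructor
    · positivity
    · rw [Real.exp_le_one_iff]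
      apply div_nonpos_of_nonpos_of_nonneg <;> linarith
  have hy1 : r' * Real.exp (-r' / Real.exp 1) ≤ Real.exp (-r / Real.exp 1) := by
    rw [hF3]
    calc r' * (r * Real.exp (-r / Real.exp 1)) = (r * r') * Real.exp (-r / Real.exp 1) := by ring
      _ ≤ 1 * Real.exp (-r / Real.exp 1) := by
          apply mul_le_mul_of_nonneg_right hkey (Real.exp_pos _).le
      _ = Real.exp (-r / Real.exp 1) := one_mul _
  have hy0 : 0 ≤ r' * Real.exp (-r' / Real.exp 1) := by positivity
  have hbase' := hbase r' ⟨hr'0, hr'1⟩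
  rw [hF3] at hbase'
  have hmono' : ψ (r' * Real.exp (-r' / Real.exp 1)) ≤ ψ (Real.exp (-r / Real.exp 1)) :=
    hmono ⟨hy0, le_trans hy1 hx1.2⟩ hx1 hy1
  rw [hF3] at hmono'
  linarith
end

section
/- For r > 1 the function g(y) = (1/y)·ln((1-ry)/(1-y)) is decreasing on the interval (0, 1/r). -/
open Real Set

private lemma psi_hasDeriv (r : ℝ) (y : ℝ) (hy1 : 1 - y ≠ 0) (hry : 1 - r * y ≠ 0) :
    HasDerivAt (fun y : ℝ => Real.log (1 - r * y) - Real.log (1 - y)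
      - (1 - r) * (y / ((1 - y) * (1 - r * y))))
      ((-r) / (1 - r * y) - (-1) / (1 - y)
        - (1 - r) * ((1 * ((1 - y) * (1 - r * y)) -
            y * ((-1) * (1 - r * y) + (1 - y) * (-r))) / ((1 - y) * (1 - r * y)) ^ 2)) y := by
  have h1 : HasDerivAt (fun y : ℝ => 1 - r * y) (-r) y := by
    simpa using ((hasDerivAt_id y).const_mul r).const_sub 1
  have h2 : HasDerivAt (fun y : ℝ => 1 - y) (-1) y := by
    simpa using (hasDerivAt_id y).const_sub 1
  have hD : HasDerivAt (fun y : ℝ => (1 - y) * (1 - r * y))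
      ((-1) * (1 - r * y) + (1 - y) * (-r)) y := h2.mul h1
  have hfrac : HasDerivAt (fun y : ℝ => y / ((1 - y) * (1 - r * y)))
      ((1 * ((1 - y) * (1 - r * y)) - y * ((-1) * (1 - r * y) + (1 - y) * (-r)))
        / ((1 - y) * (1 - r * y)) ^ 2) y :=
    (hasDerivAt_id y).div hD (mul_ne_zero hy1 hry)
  exact ((h1.log hry).sub (h2.log hy1)).sub (hfrac.const_mul (1 - r))

private lemma psi_pos (r : ℝ) (hr : 1 < r) {y : ℝ} (hy : y ∈ Set.Ioo 0 (1 / r)) :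
    0 < Real.log (1 - r * y) - Real.log (1 - y)
      - (1 - r) * (y / ((1 - y) * (1 - r * y))) := by
  have hr0 : (0 : ℝ) < r := lt_trans one_pos hr
  set ψ : ℝ → ℝ := fun y => Real.log (1 - r * y) - Real.log (1 - y)
      - (1 - r) * (y / ((1 - y) * (1 - r * y))) with hψ
  have hfacts : ∀ z ∈ Set.Ico (0 : ℝ) (1 / r), 0 < 1 - z ∧ 0 < 1 - r * z := by
    intro z hz
    obtain ⟨hz0, hz1⟩ := hz
    have hrz : r * z < 1 := by
      have := (lt_div_iff₀ hr0).mp hz1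
      linarith
    constructor
    · nlinarith
    · linarith
  have hmono : StrictMonoOn ψ (Set.Ico 0 (1 / r)) := by
    apply strictMonoOn_of_deriv_pos (convex_Ico 0 (1 / r))
    · apply ContinuousOn.sub
      · apply ContinuousOn.sub
        · apply ContinuousOn.log
          · fun_prop
          · intro z hz; exact (hfacts z hz).2.ne'
        · apply ContinuousOn.log
          · fun_prop
          · intro z hz; exact (hfacts z hz).1.ne'
      · apply ContinuousOn.mul continuousOn_const
        apply ContinuousOn.div continuousOn_id
        · fun_prop
        · intro z hz; exact (mul_pos (hfacts z hz).1 (hfacts z hz).2).ne'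
    · intro z hz
      rw [interior_Ico] at hz
      obtain ⟨hz0, hz1⟩ := hz
      obtain ⟨h1z, hrz⟩ := hfacts z ⟨le_of_lt hz0, hz1⟩
      have hd := psi_hasDeriv r z h1z.ne' hrz.ne'
      rw [hd.deriv]
      have heq : (-r) / (1 - r * z) - (-1) / (1 - z)
          - (1 - r) * ((1 * ((1 - z) * (1 - r * z)) -
              z * ((-1) * (1 - r * z) + (1 - z) * (-r))) / ((1 - z) * (1 - r * z)) ^ 2)
          = (r - 1) * z * ((1 + r) - 2 * r * z) / ((1 - z) * (1 - r * z)) ^ 2 := by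
        field_simp
        ring
      rw [heq]
      apply div_pos
      · have h2rz : 2 * r * z < 1 + r := by
          have : r * z < 1 := by linarith
          nlinarith
        have hr1 : 0 < r - 1 := by linarith
        exact mul_pos (mul_pos hr1 hz0) (by linarith)
      · positivity
  have hy0 : (0 : ℝ) ∈ Set.Ico (0 : ℝ) (1 / r) := ⟨le_refl 0, by positivity⟩
  have hyI : y ∈ Set.Ico (0 : ℝ) (1 / r) := ⟨le_of_lt hy.1, hy.2⟩
  have := hmono hy0 hyI hy.1
  simpa [hψ] using this

theorem stmt_13 (r : ℝ) (hr : 1 < r) :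
    AntitoneOn (fun y => (1 / y) * Real.log ((1 - r * y) / (1 - y)))
      (Set.Ioo 0 (1 / r)) := by
  have hr0 : (0 : ℝ) < r := lt_trans one_pos hr
  have hfacts : ∀ z ∈ Set.Ioo (0 : ℝ) (1 / r), 0 < 1 - z ∧ 0 < 1 - r * z := by
    intro z hz
    obtain ⟨hz0, hz1⟩ := hz
    have hrz : r * z < 1 := by
      have := (lt_div_iff₀ hr0).mp hz1
      linarith
    constructor
    · nlinarith
    · linarith
  have key : ∀ y ∈ Set.Ioo (0 : ℝ) (1 / r),
      HasDerivAt (fun y => (1 / y) * Real.log ((1 - r * y) / (1 - y)))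
        (-(1 / y ^ 2) * (Real.log (1 - r * y) - Real.log (1 - y)
          - (1 - r) * (y / ((1 - y) * (1 - r * y))))) y := by
    intro y hy
    obtain ⟨h1y, hry⟩ := hfacts y hy
    have hy0 : (0 : ℝ) < y := hy.1
    have h1 : HasDerivAt (fun y : ℝ => 1 - r * y) (-r) y := by
      simpa using ((hasDerivAt_id y).const_mul r).const_sub 1
    have h2 : HasDerivAt (fun y : ℝ => 1 - y) (-1) y := by
      simpa using (hasDerivAt_id y).const_sub 1
    have hq : HasDerivAt (fun y : ℝ => (1 - r * y) / (1 - y))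
        (((-r) * (1 - y) - (1 - r * y) * (-1)) / (1 - y) ^ 2) y := h1.div h2 h1y.ne'
    have hqpos : 0 < (1 - r * y) / (1 - y) := div_pos hry h1y
    have hlog := hq.log hqpos.ne'
    have hinv : HasDerivAt (fun y : ℝ => 1 / y) (-(1 / y ^ 2)) y := by
      simpa [one_div] using hasDerivAt_inv hy0.ne'
    have hmul := hinv.mul hlog
    have heq : -(1 / y ^ 2) * Real.log ((1 - r * y) / (1 - y)) +
        1 / y * ((((-r) * (1 - y) - (1 - r * y) * (-1)) / (1 - y) ^ 2) / ((1 - r * y) / (1 - y)))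
        = -(1 / y ^ 2) * (Real.log (1 - r * y) - Real.log (1 - y)
          - (1 - r) * (y / ((1 - y) * (1 - r * y)))) := by
      rw [Real.log_div hry.ne' h1y.ne']
      field_simp
      ring
    rw [heq] at hmul
    exact hmul
  apply antitoneOn_of_deriv_nonpos (convex_Ioo 0 (1 / r))
  · intro y hy
    exact ((key y hy).continuousAt).continuousWithinAt
  · intro y hy
    rw [interior_Ioo] at hy
    exact ((key y hy).differentiableAt).differentiableWithinAt
  · intro y hy
    rw [interior_Ioo] at hy
    rw [(key y hy).deriv]
    have hpos := psi_pos r hr hy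
    have hy0 : (0 : ℝ) < y := hy.1
    have : (0 : ℝ) < 1 / y ^ 2 := by positivity
    nlinarith
end

section
/- For 0 ≤ x ≤ 1 and for (e-x) in the complementary position: (e-x+1)·e^{-(e-x)/e} ≥ (x+1)·e^{-x/e}. That is, with f(t) = (t+1)e^{-t/e}, we have f(e-x) ≥ f(x) for all x ∈ [0,1]. -/
theorem stmt_14 (x : ℝ) (hx : x ∈ Set.Icc (0:ℝ) 1) :
    (Real.exp 1 - x + 1) * Real.exp (-(Real.exp 1 - x) / Real.exp 1) ≥
      (x + 1) * Real.exp (-x / Real.exp 1) := by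
  obtain ⟨hx0, hx1⟩ := hx
  set e := Real.exp 1 with he
  have he1 : (2.7182818283:ℝ) < e := Real.exp_one_gt_d9
  have he2 : e < 2.7182818286 := Real.exp_one_lt_d9
  have hepos : (0:ℝ) < e := by linarith
  set t : ℝ := 2 * x / e with ht
  have ht0 : 0 ≤ t := by positivity
  have hte : t * e = 2 * x := by rw [ht]; field_simp [hepos.ne']
  -- cubic lower bound on exp t
  have hP : 1 + t + t ^ 2 / 2 + t ^ 3 / 6 ≤ Real.exp t := by
    have := Real.sum_le_exp_of_nonneg ht0 4
    simp [Finset.sum_range_succ] at this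
    convert this using 1
    norm_num [Nat.factorial]
  have hPpos : (0:ℝ) < 1 + t + t ^ 2 / 2 + t ^ 3 / 6 := by positivity
  -- polynomial inequality
  have hpoly : e * (x + 1) ≤ (e + 1 - x) * (1 + t + t ^ 2 / 2 + t ^ 3 / 6) := by
    nlinarith [sq_nonneg t, sq_nonneg x, sq_nonneg (x - 1), sq_nonneg (t - 1),
      mul_nonneg ht0 hx0, mul_nonneg (mul_nonneg ht0 ht0) ht0,
      mul_nonneg ht0 (sub_nonneg.mpr hx1)]
  set a : ℝ := Real.exp (-x / e) with ha
  set b : ℝ := Real.exp (-(e - x) / e) with hb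
  have hapos : 0 < a := Real.exp_pos _
  have hbpos : 0 < b := Real.exp_pos _
  have hab : b * a = Real.exp (-1) := by
    rw [hb, ha, ← Real.exp_add]
    congr 1
    field_simp
    ring
  have haa : Real.exp t * (a * a) = 1 := by
    rw [ha, ← Real.exp_add, ← Real.exp_add]
    rw [← Real.exp_zero]
    congr 1
    field_simp [ht]
    linarith [hte]
  have hainv : a * a = (Real.exp t)⁻¹ := by
    field_simp at haa ⊢
    linarith [haa]
  -- key: e * (x+1) * (a*a) ≤ e + 1 - x
  have hex : 0 ≤ e + 1 - x := by linarith
  have hkey : e * (x + 1) * (a * a) ≤ e + 1 - x := by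
    rw [hainv, ← div_eq_mul_inv, div_le_iff₀ (Real.exp_pos t)]
    calc e * (x + 1) ≤ (e + 1 - x) * (1 + t + t ^ 2 / 2 + t ^ 3 / 6) := hpoly
      _ ≤ (e + 1 - x) * Real.exp t := mul_le_mul_of_nonneg_left hP hex
  have hstep : (x + 1) * a * a ≤ (e - x + 1) * b * a := by
    have h1 : (e - x + 1) * b * a = (e - x + 1) * Real.exp (-1) := by
      rw [mul_assoc, hab]
    rw [h1, Real.exp_neg, ← he, mul_assoc, ← div_eq_mul_inv, le_div_iff₀ hepos]
    nlinarith [hkey]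
  exact le_of_mul_le_mul_right hstep hapos
end

section
/- For all x ∈ [0,1], (e-x)·e^{-(e-x)/e} ≥ e^{-x/e}. -/
theorem stmt_15 (x : ℝ) (hx : x ∈ Set.Icc (0:ℝ) 1) :
    (Real.exp 1 - x) * Real.exp (-(Real.exp 1 - x) / Real.exp 1) ≥
      Real.exp (-x / Real.exp 1) := by
  obtain ⟨hx0, hx1⟩ := hx
  set E := Real.exp 1 with hEdef
  have hE : (0:ℝ) < E := Real.exp_pos 1
  have hE27 : (2.7:ℝ) < E := by
    have := Real.exp_one_gt_d9; rw [hEdef]; linarith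
  -- key: exp(1 - 2x/E) ≤ E - x
  have hB : 1 + 2*x/E ≤ Real.exp (2*x/E) := by
    linarith [Real.add_one_le_exp (2*x/E)]
  have hAB : Real.exp (1 - 2*x/E) * Real.exp (2*x/E) = E := by
    rw [← Real.exp_add]; ring_nf; exact hEdef.symm
  have hApos : 0 < Real.exp (1 - 2*x/E) := Real.exp_pos _
  have hBpos : (0:ℝ) < 1 + 2*x/E := by positivity
  have hA : Real.exp (1 - 2*x/E) * (1 + 2*x/E) ≤ E := by
    calc Real.exp (1 - 2*x/E) * (1 + 2*x/E)
        ≤ Real.exp (1 - 2*x/E) * Real.exp (2*x/E) := by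
          exact mul_le_mul_of_nonneg_left hB hApos.le
      _ = E := hAB
  have hkey : Real.exp (1 - 2*x/E) ≤ E - x := by
    have h1 : (E - x) * (1 + 2*x/E) ≥ E := by
      have : (E - x) * (1 + 2*x/E) - E = x * (E - 2*x) / E := by
        field_simp; ring
      rw [ge_iff_le, ← sub_nonneg, this]
      exact div_nonneg (mul_nonneg hx0 (by linarith)) hE.le
    calc Real.exp (1 - 2*x/E) = Real.exp (1 - 2*x/E) * (1 + 2*x/E) / (1 + 2*x/E) := by
          field_simp
      _ ≤ E / (1 + 2*x/E) := by gcongr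
      _ ≤ (E - x) * (1 + 2*x/E) / (1 + 2*x/E) := by gcongr
      _ = E - x := by field_simp
  calc Real.exp (-x / E) = Real.exp (1 - 2*x/E) * Real.exp (-(E - x) / E) := by
        rw [← Real.exp_add]; congr 1; field_simp; ring
    _ ≤ (E - x) * Real.exp (-(E - x) / E) :=
        mul_le_mul_of_nonneg_right hkey (Real.exp_pos _).le
end

section
/- Let ψ : [0,1] → [0,1] be a convex increasing function with ψ(0) = 0 and ψ(1) = 1, let C ≥ e^{1/e}, and let x = (x_1,...,x_n) be a stochastic vector with maximal coordinate y = max_i x_i > 0. Then ∑_{j=1}^n ψ(x_j / (C·∏_{k=1}^n (1-x_k)^{1-x_k})) ≤ (1/y)·ψ(y·e^{1-y} / (C·(1-y)^{1-y})). -/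
open scoped BigOperators

lemma aux_rpow_pos {b : ℝ} (hb : 0 ≤ b) : 0 < b ^ (b:ℝ) := by
  rcases eq_or_lt_of_le hb with h|h
  · simp [← h]
  · exact Real.rpow_pos_of_pos h b

lemma aux_exp_le {t : ℝ} (ht0 : 0 ≤ t) (ht1 : t ≤ 1) :
    Real.exp (-t) ≤ (1 - t) ^ (1 - t : ℝ) := by
  rcases eq_or_lt_of_le ht1 with h|h
  · subst h
    simp only [sub_self, Real.rpow_zero]
    exact (Real.exp_le_one_iff.2 (by norm_num)).trans_eq rfl
  · have hu : 0 < 1 - t := by linarith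
    rw [Real.rpow_def_of_pos hu]
    apply Real.exp_le_exp.2
    have h1 := Real.log_le_sub_one_of_pos (x := (1-t)⁻¹) (by positivity)
    rw [Real.log_inv] at h1
    have h2 : (1-t) * (1-t)⁻¹ = 1 := mul_inv_cancel₀ (ne_of_gt hu)
    nlinarith [h1, h2, hu]

lemma aux_log_le_div_e {t : ℝ} (ht : 0 < t) : Real.log t ≤ t / Real.exp 1 := by
  have he : (0:ℝ) < Real.exp 1 := Real.exp_pos 1
  have h1 := Real.log_le_sub_one_of_pos (x := t / Real.exp 1) (by positivity)
  rw [Real.log_div (ne_of_gt ht) (ne_of_gt he), Real.log_exp] at h1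
  linarith

-- -s log s ≤ 1/e for s > 0
lemma aux_mul_log {s : ℝ} (hs : 0 < s) : -(s * Real.log s) ≤ 1 / Real.exp 1 := by
  have h1 := aux_log_le_div_e (t := s⁻¹) (by positivity)
  rw [Real.log_inv] at h1
  have h2 : s * s⁻¹ = 1 := mul_inv_cancel₀ (ne_of_gt hs)
  have he : (0:ℝ) < Real.exp 1 := Real.exp_pos 1
  have h3 := mul_le_mul_of_nonneg_left h1 hs.le
  calc -(s * Real.log s) = s * (-Real.log s) := by ring
  _ ≤ s * (s⁻¹ / Real.exp 1) := h3
  _ = 1 / Real.exp 1 := by rw [← mul_div_assoc, h2]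

-- y e^{1-y} ≤ e^{1/e} (1-y)^{1-y} for 0 < y ≤ 1
lemma aux_key {y : ℝ} (hy : 0 < y) (hy1 : y ≤ 1) :
    y * Real.exp (1 - y) ≤ Real.exp (1 / Real.exp 1) * (1 - y) ^ (1 - y : ℝ) := by
  rcases eq_or_lt_of_le hy1 with h|h
  · subst h
    simp only [sub_self, Real.rpow_zero, mul_one, one_mul]
    rw [Real.exp_zero]
    exact Real.one_le_exp (by positivity)
  · have hs : 0 < 1 - y := by linarith
    rw [Real.rpow_def_of_pos hs, ← Real.exp_add]
    calc y * Real.exp (1 - y) = Real.exp (Real.log y + (1 - y)) := by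
          rw [Real.exp_add, Real.exp_log hy]
    _ ≤ Real.exp (1 / Real.exp 1 + Real.log (1 - y) * (1 - y)) := by
        apply Real.exp_le_exp.2
        have h1 : Real.log y ≤ y - 1 := Real.log_le_sub_one_of_pos hy
        have h2 := aux_mul_log hs
        have : Real.log (1-y) * (1-y) = (1-y) * Real.log (1-y) := mul_comm _ _
        linarith

theorem stmt_16 (ψ : ℝ → ℝ)
    (hconv : ConvexOn ℝ (Set.Icc 0 1) ψ)
    (hmono : MonotoneOn ψ (Set.Icc 0 1))
    (h0 : ψ 0 = 0) (h1 : ψ 1 = 1)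
    (C : ℝ) (hC : C ≥ Real.exp (1 / Real.exp 1))
    {n : ℕ} (x : Fin n → ℝ) (hx : ∀ i, 0 ≤ x i) (hsum : ∑ i, x i = 1)
    (y : ℝ) (hy : 0 < y) (hmax : ∀ i, x i ≤ y) (hatt : ∃ i, x i = y) :
    ∑ j, ψ (x j / (C * ∏ k, (1 - x k) ^ (1 - x k))) ≤
      (1 / y) * ψ (y * Real.exp (1 - y) / (C * (1 - y) ^ (1 - y))) := by
  obtain ⟨i, hi⟩ := hatt
  have hy1 : y ≤ 1 := by
    calc y = x i := hi.symm
    _ ≤ ∑ j, x j := Finset.single_le_sum (fun j _ => hx j) (Finset.mem_univ i)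
    _ = 1 := hsum
  have hxk1 : ∀ k, x k ≤ 1 := fun k => (hmax k).trans hy1
  set P : ℝ := ∏ k, (1 - x k) ^ (1 - x k : ℝ) with hP
  have hPpos : 0 < P := Finset.prod_pos (fun k _ => aux_rpow_pos (by linarith [hxk1 k]))
  have hCpos : 0 < C := lt_of_lt_of_le (Real.exp_pos _) hC
  have hCP : 0 < C * P := mul_pos hCpos hPpos
  -- key product bound
  have hprod : Real.exp (-(1 - y)) * (1 - y) ^ (1 - y : ℝ) ≤ P := by
    have hsplit : P = (1 - y) ^ (1 - y : ℝ) *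
        ∏ k ∈ Finset.univ.erase i, (1 - x k) ^ (1 - x k : ℝ) := by
      rw [hP, ← Finset.mul_prod_erase _ _ (Finset.mem_univ i), hi]
    have hsumrest : ∑ k ∈ Finset.univ.erase i, x k = 1 - y := by
      have := Finset.add_sum_erase Finset.univ x (Finset.mem_univ i)
      rw [hsum, hi] at this
      linarith
    have h2 : Real.exp (-(1 - y)) ≤
        ∏ k ∈ Finset.univ.erase i, (1 - x k) ^ (1 - x k : ℝ) := by
      calc Real.exp (-(1 - y)) = ∏ k ∈ Finset.univ.erase i, Real.exp (-(x k)) := by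
            rw [← Real.exp_sum]
            congr 1
            rw [← hsumrest, ← Finset.sum_neg_distrib]
      _ ≤ _ := Finset.prod_le_prod (fun k _ => (Real.exp_pos _).le)
            (fun k _ => aux_exp_le (hx k) (hxk1 k))
    calc Real.exp (-(1 - y)) * (1 - y) ^ (1 - y : ℝ)
        ≤ (∏ k ∈ Finset.univ.erase i, (1 - x k) ^ (1 - x k : ℝ)) * (1 - y) ^ (1 - y : ℝ) :=
          mul_le_mul_of_nonneg_right h2 (aux_rpow_pos (by linarith)).le
    _ = P := by rw [hsplit]; ring
  have hrpos : 0 < (1 - y) ^ (1 - y : ℝ) := aux_rpow_pos (by linarith)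
  have hdenom : 0 < C * (1 - y) ^ (1 - y : ℝ) := mul_pos hCpos hrpos
  set z : ℝ := y * Real.exp (1 - y) / (C * (1 - y) ^ (1 - y : ℝ)) with hz
  set a : ℝ := y / (C * P) with ha
  have haz : a ≤ z := by
    rw [ha, hz, div_le_div_iff₀ hCP hdenom]
    have hmul := mul_le_mul_of_nonneg_left hprod
      (by positivity : (0:ℝ) ≤ y * Real.exp (1 - y) * C)
    have hee : Real.exp (1 - y) * Real.exp (-(1 - y)) = 1 := by
      rw [← Real.exp_add]; simp
    calc y * (C * (1 - y) ^ (1 - y : ℝ))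
        = y * Real.exp (1 - y) * C * (Real.exp (-(1 - y)) * (1 - y) ^ (1 - y : ℝ)) := by
          rw [show y * Real.exp (1 - y) * C * (Real.exp (-(1 - y)) * (1 - y) ^ (1 - y : ℝ))
            = y * C * (1 - y) ^ (1 - y : ℝ) * (Real.exp (1 - y) * Real.exp (-(1 - y))) from by
              ring, hee]
          ring
    _ ≤ y * Real.exp (1 - y) * C * P := hmul
    _ = y * Real.exp (1 - y) * (C * P) := by ring
  have hz1 : z ≤ 1 := by
    rw [hz, div_le_one hdenom]
    calc y * Real.exp (1 - y) ≤ Real.exp (1 / Real.exp 1) * (1 - y) ^ (1 - y : ℝ) :=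
          aux_key hy hy1
    _ ≤ C * (1 - y) ^ (1 - y : ℝ) := mul_le_mul_of_nonneg_right hC hrpos.le
  have hz0 : 0 ≤ z := by rw [hz]; positivity
  have ha0 : 0 ≤ a := by rw [ha]; positivity
  have ha1 : a ≤ 1 := haz.trans hz1
  have haI : a ∈ Set.Icc (0:ℝ) 1 := ⟨ha0, ha1⟩
  have h0I : (0:ℝ) ∈ Set.Icc (0:ℝ) 1 := ⟨le_refl 0, zero_le_one⟩
  have hψa0 : 0 ≤ ψ a := by
    have := hmono h0I haI ha0
    rwa [h0] at this
  have hstep : ∀ j, ψ (x j / (C * P)) ≤ (x j / y) * ψ a := by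
    intro j
    have ht0 : 0 ≤ x j / y := div_nonneg (hx j) hy.le
    have ht1 : x j / y ≤ 1 := (div_le_one hy).2 (hmax j)
    have harg : x j / (C * P) = (x j / y) * a := by
      rw [ha]
      field_simp
    have hb : (0:ℝ) ≤ 1 - x j / y := by linarith
    have hab : x j / y + (1 - x j / y) = 1 := by ring
    have hcv := hconv.2 haI h0I ht0 hb hab
    rw [h0] at hcv
    simp only [smul_eq_mul, mul_zero, add_zero] at hcv
    rw [harg]
    exact hcv
  calc ∑ j, ψ (x j / (C * P)) ≤ ∑ j, (x j / y) * ψ a :=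
        Finset.sum_le_sum (fun j _ => hstep j)
  _ = (1 / y) * ψ a := by
      rw [← Finset.sum_mul]
      rw [← Finset.sum_div, hsum]
  _ ≤ (1 / y) * ψ z :=
      mul_le_mul_of_nonneg_left (hmono haI ⟨hz0, hz1⟩ haz) (by positivity)
end

section
/- Let a be the unique root in (1,e) of (1-ln a)/a = 1/e and ψ(x) = 1 - (1-x)·a^x. Then for all y ∈ (0,1], (1/y)·ψ(y·e^{1-y}/(2·(1-y)^{1-y})) ≤ 1. -/
open Real

private lemma cubic_le_exp {x : ℝ} (hx : 0 ≤ x) :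
    1 + x + x ^ 2 / 2 + x ^ 3 / 6 ≤ Real.exp x := by
  have h := Real.sum_le_exp_of_nonneg hx 4
  rw [Finset.sum_range_succ, Finset.sum_range_succ, Finset.sum_range_succ,
    Finset.sum_range_succ, Finset.sum_range_zero] at h
  norm_num [Nat.factorial] at h
  linarith

private lemma log_lb {u : ℝ} (h0 : 0 < u) (h1 : u ≤ 1) :
    (u - 1 / u) / 2 ≤ Real.log u := by
  have ht : 0 ≤ -Real.log u := by
    have := Real.log_nonpos (le_of_lt h0) h1
    linarith
  have hs : -Real.log u ≤ Real.sinh (-Real.log u) := by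
    rcases eq_or_lt_of_le ht with h | h
    · rw [← h]; simp
    · exact le_of_lt ((Real.self_lt_sinh_iff).2 h)
  rw [Real.sinh_eq] at hs
  rw [Real.exp_neg, neg_neg, Real.exp_log h0] at hs
  rw [one_div]
  linarith

private lemma log_a_lb (a : ℝ) (ha1 : 1 < a)
    (ha : (1 - Real.log a) / a = 1 / Real.exp 1) : 0.43 ≤ Real.log a := by
  have ha0 : (0:ℝ) < a := lt_trans one_pos ha1
  have he : (0:ℝ) < Real.exp 1 := Real.exp_pos 1
  have key : (1 - Real.log a) * Real.exp 1 = a := by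
    field_simp at ha
    linarith [ha]
  by_contra h
  push_neg at h
  have h1 : a < Real.exp 0.43 := by
    rw [← Real.exp_log ha0]
    exact Real.exp_lt_exp.2 h
  have h2 : Real.exp 0.43 * Real.exp 0.57 = Real.exp 1 := by
    rw [← Real.exp_add]; norm_num
  have h3 : (1.76331 : ℝ) ≤ Real.exp 0.57 := by
    have := cubic_le_exp (x := 0.57) (by norm_num)
    norm_num at this ⊢
    linarith
  have h4 : 0.57 * Real.exp 1 < a := by
    nlinarith
  nlinarith [Real.exp_pos 0.57, Real.exp_pos 0.43]

private lemma wkey {y D : ℝ} (hy0 : 0 < y) (hy1 : y ≤ 1)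
    (hD : D = 1 + y ^ 2 / 2 + y ^ 4 / 8) :
    y / 2 * (2.72 / D) * (0.57 + 0.43 * (y / 2 * (2.72 / D))) ≤ y := by
  have hDpos : (0:ℝ) < D := by rw [hD]; positivity
  have hpoly : 0.7752 * D + 0.795328 * y ≤ D ^ 2 := by
    rw [hD]
    nlinarith [sq_nonneg (y - 1/2), sq_nonneg (y^2 - 1/4), sq_nonneg y,
      sq_nonneg (y^2 - y), sq_nonneg (y^3 - y), sq_nonneg (y^2 + y - 1),
      mul_pos hy0 hy0, pow_pos hy0 3, pow_pos hy0 4,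
      mul_nonneg (le_of_lt hy0) (sq_nonneg (y - 1/2)),
      mul_nonneg (mul_nonneg (le_of_lt hy0) (le_of_lt hy0)) (sq_nonneg (y - 1)),
      sq_nonneg ((y - 1/2) * y), sq_nonneg ((y^2 - 1/2) * y)]
  have expand : y / 2 * (2.72 / D) * (0.57 + 0.43 * (y / 2 * (2.72 / D))) * (4 * D ^ 2)
      = y * 2.72 * (1.14 * D + 1.1696 * y) := by
    field_simp
    ring
  have hmain : y / 2 * (2.72 / D) * (0.57 + 0.43 * (y / 2 * (2.72 / D))) * (4 * D ^ 2)
      ≤ y * (4 * D ^ 2) := by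
    rw [expand]
    nlinarith [mul_le_mul_of_nonneg_left hpoly (le_of_lt hy0), hDpos]
  exact le_of_mul_le_mul_right hmain (by positivity)

set_option maxHeartbeats 1000000 in
theorem stmt_17 (a : ℝ) (ha1 : 1 < a) (ha2 : a < Real.exp 1)
    (ha : (1 - Real.log a) / a = 1 / Real.exp 1)
    (ψ : ℝ → ℝ) (hψ : ∀ x, ψ x = 1 - (1 - x) * a ^ x) :
    ∀ y ∈ Set.Ioc (0:ℝ) 1,
      (1 / y) * ψ (y * Real.exp (1 - y) / (2 * (1 - y) ^ (1 - y))) ≤ 1 := by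
  intro y hy
  obtain ⟨hy0, hy1⟩ := hy
  have ha0 : (0:ℝ) < a := lt_trans one_pos ha1
  have hla : (0.43:ℝ) ≤ Real.log a := log_a_lb a ha1 ha
  rcases eq_or_lt_of_le hy1 with h1 | h1
  · -- y = 1
    subst h1
    have h0 : (1:ℝ) - 1 = 0 := by norm_num
    rw [h0]
    have h00 : ((0:ℝ) ^ (0:ℝ) : ℝ) = 1 := Real.rpow_zero 0
    rw [h00]
    norm_num
    rw [hψ]
    have : (0:ℝ) ≤ a ^ (2⁻¹ : ℝ) := Real.rpow_nonneg (le_of_lt ha0) _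
    nlinarith
  · -- y < 1
    set x := y * Real.exp (1 - y) / (2 * (1 - y) ^ (1 - y)) with hx
    have hu0 : (0:ℝ) < 1 - y := by linarith
    have hu1 : (1:ℝ) - y ≤ 1 := by linarith
    have hpow : (1 - y) ^ (1 - y) = Real.exp ((1 - y) * Real.log (1 - y)) := by
      rw [Real.rpow_def_of_pos hu0]; ring_nf
    have hlog : ((1 - y) ^ 2 - 1) / 2 ≤ (1 - y) * Real.log (1 - y) := by
      have hl := log_lb hu0 hu1
      have h2 : (1 - y) * ((1 - y) - 1 / (1 - y)) / 2 ≤ (1 - y) * Real.log (1 - y) := by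
        nlinarith [hl, hu0]
      have h3 : (1 - y) * ((1 - y) - 1 / (1 - y)) / 2 = ((1 - y) ^ 2 - 1) / 2 := by
        field_simp
      linarith [h3 ▸ h2]
    have hden : Real.exp (((1 - y) ^ 2 - 1) / 2) ≤ (1 - y) ^ (1 - y) := by
      rw [hpow]; exact Real.exp_le_exp.2 hlog
    have hdenpos : (0:ℝ) < (1 - y) ^ (1 - y) :=
      lt_of_lt_of_le (Real.exp_pos _) hden
    -- x ≤ (y/2) * exp (1 - y^2/2)
    have hxle : x ≤ y / 2 * Real.exp (1 - y ^ 2 / 2) := by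
      rw [hx]
      have hnum : 0 ≤ y * Real.exp (1 - y) := by positivity
      have step1 : y * Real.exp (1 - y) / (2 * (1 - y) ^ (1 - y)) ≤
          y * Real.exp (1 - y) / (2 * Real.exp (((1 - y) ^ 2 - 1) / 2)) := by
        apply div_le_div_of_nonneg_left hnum
        · positivity
        · nlinarith [hden]
      have hdiv : Real.exp (1 - y) / Real.exp (((1 - y) ^ 2 - 1) / 2) =
          Real.exp (1 - y ^ 2 / 2) := by
        rw [← Real.exp_sub]; congr 1; ring
      have step2 : y * Real.exp (1 - y) / (2 * Real.exp (((1 - y) ^ 2 - 1) / 2)) =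
          y / 2 * Real.exp (1 - y ^ 2 / 2) := by
        rw [← hdiv]
        field_simp
      linarith
    have hx0 : 0 ≤ x := by
      rw [hx]; positivity
    have hE : Real.exp 1 < 2.72 := lt_trans Real.exp_one_lt_d9 (by norm_num)
    have hD : Real.exp (1 - y ^ 2 / 2) ≤ 2.72 / (1 + y ^ 2 / 2 + y ^ 4 / 8) := by
      have hsplit : Real.exp (1 - y ^ 2 / 2) * Real.exp (y ^ 2 / 2) = Real.exp 1 := by
        rw [← Real.exp_add]; ring_nf
      have hq : 1 + y ^ 2 / 2 + y ^ 4 / 8 ≤ Real.exp (y ^ 2 / 2) := by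
        have := cubic_le_exp (x := y ^ 2 / 2) (by positivity)
        nlinarith [pow_pos hy0 6]
      rw [le_div_iff₀ (by positivity)]
      calc Real.exp (1 - y ^ 2 / 2) * (1 + y ^ 2 / 2 + y ^ 4 / 8)
          ≤ Real.exp (1 - y ^ 2 / 2) * Real.exp (y ^ 2 / 2) := by
            apply mul_le_mul_of_nonneg_left hq (le_of_lt (Real.exp_pos _))
        _ = Real.exp 1 := hsplit
        _ ≤ 2.72 := le_of_lt hE
    have hDpos : (0:ℝ) < 1 + y ^ 2 / 2 + y ^ 4 / 8 := by positivity
    have hw : x ≤ y / 2 * (2.72 / (1 + y ^ 2 / 2 + y ^ 4 / 8)) := by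
      have := mul_le_mul_of_nonneg_left hD (le_of_lt (half_pos hy0))
      linarith
    have hkey : y / 2 * (2.72 / (1 + y ^ 2 / 2 + y ^ 4 / 8)) *
        (0.57 + 0.43 * (y / 2 * (2.72 / (1 + y ^ 2 / 2 + y ^ 4 / 8)))) ≤ y :=
      wkey hy0 hy1 rfl
    have hw0 : (0:ℝ) ≤ y / 2 * (2.72 / (1 + y ^ 2 / 2 + y ^ 4 / 8)) := by positivity
    -- x ≤ 1
    have hx1 : x ≤ 1 := by
      have h8 : y * 2.72 ≤ 2 * (1 + y ^ 2 / 2 + y ^ 4 / 8) := by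
        nlinarith [sq_nonneg (y - 1.36), pow_pos hy0 4]
      have h9 : y / 2 * (2.72 / (1 + y ^ 2 / 2 + y ^ 4 / 8)) ≤ 1 := by
        rw [div_mul_div_comm, div_le_one (by positivity)]
        linarith
      linarith
    -- ψ x ≤ 0.57 x + 0.43 x^2
    have hpsi : ψ x ≤ 0.57 * x + 0.43 * x ^ 2 := by
      rw [hψ]
      have hax : a ^ x = Real.exp (x * Real.log a) := by
        rw [Real.rpow_def_of_pos ha0]; ring_nf
      have h5 : 1 + x * Real.log a ≤ a ^ x := by
        rw [hax]; linarith [Real.add_one_le_exp (x * Real.log a)]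
      have h6 : 1 + 0.43 * x ≤ 1 + x * Real.log a := by
        nlinarith [hx0, hla]
      have h7 : (1 - x) * (1 + 0.43 * x) ≤ (1 - x) * (a ^ x) := by
        apply mul_le_mul_of_nonneg_left (by linarith) (by linarith)
      nlinarith [h7]
    have hgen : ∀ u v : ℝ, 0 ≤ u → u ≤ v → u * (0.57 + 0.43 * u) ≤ v * (0.57 + 0.43 * v) := by
      intro u v hu huv
      nlinarith
    have hxw := hgen x (y / 2 * (2.72 / (1 + y ^ 2 / 2 + y ^ 4 / 8))) hx0 hw
    have heq : 0.57 * x + 0.43 * x ^ 2 = x * (0.57 + 0.43 * x) := by ring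
    have hfin : ψ x ≤ y := by
      rw [heq] at hpsi
      exact le_trans hpsi (le_trans hxw hkey)
    rw [one_div, inv_mul_le_iff₀ hy0]
    linarith
end
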